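/- arXiv:1808.10589 — 2 statements merged into one kernel-verified Lean document; each statement's English description precedes it below -/
import Mathlib

section
/- Let p,q ≥ 1 and let π ∈ S_ann-nc(p,q). Then every bridge of π is of the form (a₁,…,a_r,b₁,…,b_s) in cycle notation with a₁,…,a_r ∈ [p] and b₁,…,b_s ∈ [p+1,p+q]; consequently each bridge contains exactly one element a ∈ [p] with π(a) ∈ [p+1,p+q] and exactly one element b ∈ [p+1,p+q] with π(b) ∈ [p]. -/
namespace AnnNC

/-- The orbit ("same cycle") setoid of a permutation. -/
def orbitSetoid {α : Type*} (σ : Equiv.Perm α) : Setoid α :=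
  ⟨σ.SameCycle, ⟨fun x => Equiv.Perm.SameCycle.refl σ x,
    fun h => h.symm, fun h h' => h.trans h'⟩⟩

/-- Number of orbits (cycles, counting fixed points) of a permutation. -/
noncomputable def numOrbits {α : Type*} (σ : Equiv.Perm α) : ℕ :=
  Nat.card (Quotient (orbitSetoid σ))

/-- Number of blocks of the join `Π(σ) ∨ Π(ρ)` of the orbit partitions. -/
noncomputable def numJoin {α : Type*} (σ ρ : Equiv.Perm α) : ℕ :=
  Nat.card (Quotient (orbitSetoid σ ⊔ orbitSetoid ρ))

/-- Euler characteristic `χ_ρ(π) = #(ρ) + #(π) + #(π⁻¹ρ) − n`. -/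
noncomputable def euler {α : Type*} (ρ π : Equiv.Perm α) : ℤ :=
  (numOrbits ρ : ℤ) + (numOrbits π : ℤ) + (numOrbits (π⁻¹ * ρ) : ℤ) - (Nat.card α : ℤ)

/-- `π` is noncrossing on `ρ`. -/
def IsNoncrossingOn {α : Type*} (π ρ : Equiv.Perm α) : Prop :=
  euler ρ π = 2 * (numJoin π ρ : ℤ)

/-- Euler characteristic of permutations regarded as permutations of a subset `S`
(for permutations fixing the complement of `S` pointwise). -/
noncomputable def eulerOn {α : Type*} (S : Set α) (ρ π : Equiv.Perm α) : ℤ :=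
  ((numOrbits ρ : ℤ) - (Nat.card (Sᶜ : Set α) : ℤ)) +
    ((numOrbits π : ℤ) - (Nat.card (Sᶜ : Set α) : ℤ)) +
    ((numOrbits (π⁻¹ * ρ) : ℤ) - (Nat.card (Sᶜ : Set α) : ℤ)) - (Nat.card (S : Set α) : ℤ)

/-- `π` is noncrossing on `ρ`, both regarded as permutations of the subset `S`. -/
def IsNoncrossingWithin {α : Type*} (S : Set α) (π ρ : Equiv.Perm α) : Prop :=
  eulerOn S ρ π = 2 * ((numJoin π ρ : ℤ) - (Nat.card (Sᶜ : Set α) : ℤ))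

/-- `τ_{p,q} = (1,…,p)(p+1,…,p+q)` as a permutation of `Fin (p+q)`. -/
def tauPQ (p q : ℕ) : Equiv.Perm (Fin (p + q)) :=
  Equiv.permCongr finSumFinEquiv (Equiv.sumCongr (finRotate p) (finRotate q))

/-- Disc-noncrossing permutations: noncrossing on `τ_{p,q}` and the orbit partition
refines that of `τ_{p,q}`. -/
def SDiscNC (p q : ℕ) : Set (Equiv.Perm (Fin (p + q))) :=
  {π | IsNoncrossingOn π (tauPQ p q) ∧
    ∀ x y : Fin (p + q), π.SameCycle x y → ((x : ℕ) < p ↔ (y : ℕ) < p)}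

/-- Annular-noncrossing permutations: noncrossing on `τ_{p,q}` with at least one bridge. -/
def SAnnNC (p q : ℕ) : Set (Equiv.Perm (Fin (p + q))) :=
  {π | IsNoncrossingOn π (tauPQ p q) ∧
    ∃ a b : Fin (p + q), π.SameCycle a b ∧ (a : ℕ) < p ∧ p ≤ (b : ℕ)}

/-- The set of elements lying in bridges of `σ`. -/
def BridgeSet (p q : ℕ) (σ : Equiv.Perm (Fin (p + q))) : Set (Fin (p + q)) :=
  {x | ∃ a b : Fin (p + q), σ.SameCycle x a ∧ σ.SameCycle x b ∧ (a : ℕ) < p ∧ p ≤ (b : ℕ)}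

/-- `π₀` is the permutation induced by `π` on the partition `Π(τ_{p,q})`
(the first–return map of `π` to each of the two sides). -/
def IsPiZero (p q : ℕ) (π π₀ : Equiv.Perm (Fin (p + q))) : Prop :=
  ∀ a : Fin (p + q), ∃ k : ℕ, 0 < k ∧ π₀ a = (π ^ k) a ∧
    (((a : ℕ) < p) ↔ (((π ^ k) a : ℕ) < p)) ∧
    ∀ j : ℕ, 0 < j → j < k → ¬ (((a : ℕ) < p) ↔ (((π ^ j) a : ℕ) < p))

/-- The order `π ⪯ ρ` for (unhatted) permutations: the orbit partition of `π` refines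
that of `ρ` and `π` is noncrossing on `ρ`. -/
def permLe {α : Type*} (π ρ : Equiv.Perm α) : Prop :=
  (∀ x y : α, π.SameCycle x y → ρ.SameCycle x y) ∧ IsNoncrossingOn π ρ

/-- The order relation `π ⪯ ρ̂` in `S_nc-sd(p,q)`, i.e. `Kr(ρ) ⪯ Kr(π)`. -/
def leAnnHat (p q : ℕ) (π ρ : Equiv.Perm (Fin (p + q))) : Prop :=
  permLe (ρ⁻¹ * tauPQ p q) (π⁻¹ * tauPQ p q)

/-- `σ` is the permutation induced by `π` on the subset `J` (first-return map),
extended by the identity off `J`. -/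
def IsInducedOn {α : Type*} (π σ : Equiv.Perm α) (J : Set α) : Prop :=
  (∀ a ∉ J, σ a = a) ∧
  ∀ a ∈ J, ∃ k : ℕ, 0 < k ∧ σ a = (π ^ k) a ∧ (π ^ k) a ∈ J ∧
    ∀ j : ℕ, 0 < j → j < k → (π ^ j) a ∉ J

/-- The size of an orbit of a permutation. -/
noncomputable def orbitSize {α : Type*} (σ : Equiv.Perm α) (c : Quotient (orbitSetoid σ)) : ℕ :=
  Nat.card {x : α // Quotient.mk (orbitSetoid σ) x = c}

/-- `∏_{U ∈ Π(σ)} (−1)^{|U|−1} C_{|U|−1}`. -/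
noncomputable def catProd {α : Type*} (σ : Equiv.Perm α) : ℤ :=
  ∏ᶠ c : Quotient (orbitSetoid σ),
    ((-1 : ℤ) ^ (orbitSize σ c - 1) * (catalan (orbitSize σ c - 1) : ℤ))

/-- The carrier of the poset `S_nc-sd(p,q)`: pairs (permutation, hatted?). -/
def NCSDSet (p q : ℕ) : Set (Equiv.Perm (Fin (p + q)) × Bool) :=
  {z | (z.2 = false ∧ (z.1 ∈ SDiscNC p q ∪ SAnnNC p q)) ∨ (z.2 = true ∧ z.1 ∈ SDiscNC p q)}

/-- The partial order of `S_nc-sd(p,q)`. -/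
def ncsdLe (p q : ℕ) (a b : Equiv.Perm (Fin (p + q)) × Bool) : Prop :=
  (a.2 = false ∧ b.2 = false ∧ permLe a.1 b.1) ∨
  (b.2 = true ∧ permLe (b.1⁻¹ * tauPQ p q) (a.1⁻¹ * tauPQ p q))

set_option linter.unusedSectionVars false
set_option linter.unusedVariables false
set_option maxHeartbeats 1000000
section Aux
open Equiv Equiv.Perm

variable {α : Type*}

lemma sameCycle_of_pow {σ : Equiv.Perm α} {x y : α} {k : ℕ} (h : (σ ^ k) x = y) :
    σ.SameCycle x y := ⟨(k : ℤ), by rw [zpow_natCast, h]⟩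

lemma sameCycle_apply_self (σ : Equiv.Perm α) (x : α) : σ.SameCycle x (σ x) :=
  ⟨1, by simp⟩

/-- step-closure: if `r` relates every point to its `ρ`-image, then `r` contains
the orbit relation of `ρ`. -/
lemma rel_of_step [Finite α] (r : Setoid α) (ρ : Equiv.Perm α)
    (h : ∀ x, r x (ρ x)) {x y : α} (hxy : ρ.SameCycle x y) : r x y := by
  obtain ⟨k, -, hk⟩ := hxy.exists_pow_eq'
  clear hxy
  subst hk
  induction k with
  | zero => simpa using r.refl x
  | succ n ih =>
    rw [pow_succ', Equiv.Perm.mul_apply]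
    exact r.trans ih (h ((ρ ^ n) x))

lemma fixed_point_sameCycle {σ : Equiv.Perm α} {x y : α} [Finite α]
    (hx : σ x = x) (h : σ.SameCycle x y) : x = y := by
  obtain ⟨k, -, hk⟩ := h.exists_pow_eq'
  clear h
  subst hk
  induction k with
  | zero => simp
  | succ n ih => rw [pow_succ', Equiv.Perm.mul_apply, ← ih, hx]

lemma sameCycle_side {τ : Equiv.Perm α} {s : α → Bool} [Finite α]
    (hs : ∀ x, s (τ x) = s x) {x y : α} (h : τ.SameCycle x y) : s x = s y := by
  obtain ⟨k, -, hk⟩ := h.exists_pow_eq'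
  clear h
  subst hk
  induction k with
  | zero => simp
  | succ n ih => rw [pow_succ', Equiv.Perm.mul_apply, hs ((τ^n) x), ← ih]

section Swap
variable [Fintype α] [DecidableEq α]

omit [Fintype α] in
lemma walk_lemma (σ : Equiv.Perm α) (u v : α) :
    ∀ j : ℕ, (∀ i, 0 < i → i ≤ j → (σ ^ i) v ≠ u ∧ (σ ^ i) v ≠ v) →
      ((σ * Equiv.swap u v) ^ j) (σ v) = (σ ^ (j+1)) v := by
  intro j
  induction j with
  | zero => simp
  | succ n ih =>
    intro h
    rw [pow_succ', Equiv.Perm.mul_apply,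
      ih (fun i hi hij => h i hi (Nat.le_succ_of_le hij)), Equiv.Perm.mul_apply,
      Equiv.swap_apply_of_ne_of_ne (h (n+1) (Nat.succ_pos n) le_rfl).1
        (h (n+1) (Nat.succ_pos n) le_rfl).2]
    rw [pow_succ' σ (n+1), Equiv.Perm.mul_apply]

/-- R1: multiplying by a swap of points in different cycles connects them. -/
lemma sameCycle_mul_swap_of_not_sameCycle {σ : Equiv.Perm α} {u v : α}
    (h : ¬ σ.SameCycle u v) : (σ * Equiv.swap u v).SameCycle u v := by
  have hex : ∃ k, 0 < k ∧ (σ ^ k) v = v :=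
    ⟨orderOf σ, orderOf_pos σ, by rw [pow_orderOf_eq_one]; rfl⟩
  classical
  set m := Nat.find hex with hm
  obtain ⟨hmpos, hmv⟩ := Nat.find_spec hex
  have hmin : ∀ i, 0 < i → i < m → (σ ^ i) v ≠ v := by
    intro i hi him hiv
    exact Nat.find_min hex him ⟨hi, hiv⟩
  have hnu : ∀ i : ℕ, (σ ^ i) v ≠ u := by
    intro i hiu
    exact h (sameCycle_of_pow hiu).symm
  have hw := walk_lemma σ u v (m - 1)
    (fun i hi him => ⟨hnu i, hmin i hi (by omega)⟩)
  have key : ((σ * Equiv.swap u v) ^ m) u = v := by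
    have h1 : (σ * Equiv.swap u v) u = σ v := by
      rw [Equiv.Perm.mul_apply, Equiv.swap_apply_left]
    have : m = (m - 1) + 1 := by omega
    rw [this, pow_succ, Equiv.Perm.mul_apply, h1, hw, ← this]
    exact hmv
  exact sameCycle_of_pow key

omit [Fintype α] in
lemma pow_reduce {σ : Equiv.Perm α} {u : α} {m : ℕ} (hm : 0 < m) (h : (σ ^ m) u = u) :
    ∀ k, ∃ r, r < m ∧ (σ ^ k) u = (σ ^ r) u := by
  intro k
  induction k using Nat.strong_induction_on with
  | _ k ih =>
    by_cases hk : k < m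
    · exact ⟨k, hk, rfl⟩
    · push_neg at hk
      obtain ⟨r, hr, hre⟩ := ih (k - m) (by omega)
      refine ⟨r, hr, ?_⟩
      have e1 : (σ ^ k) u = (σ ^ (k - m)) u := by
        conv_lhs => rw [← Nat.sub_add_cancel hk]
        rw [pow_add, Equiv.Perm.mul_apply, h]
      exact e1.trans hre

/-- R2: multiplying by a swap of points in the same cycle disconnects them. -/
lemma not_sameCycle_mul_swap_of_sameCycle {σ : Equiv.Perm α} {u v : α}
    (huv : u ≠ v) (h : σ.SameCycle u v) : ¬ (σ * Equiv.swap u v).SameCycle u v := by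
  classical
  have hex : ∃ k, 0 < k ∧ ((σ ^ k) v = u ∨ (σ ^ k) v = v) :=
    ⟨orderOf σ, orderOf_pos σ, Or.inr (by rw [pow_orderOf_eq_one]; rfl)⟩
  set m := Nat.find hex with hm
  obtain ⟨hmpos, hmv⟩ := Nat.find_spec hex
  have hmin : ∀ i, 0 < i → i < m → (σ ^ i) v ≠ u ∧ (σ ^ i) v ≠ v := by
    intro i hi him
    constructor <;> intro hiv <;> exact Nat.find_min hex him ⟨hi, by tauto⟩
  -- the first return cannot be to v
  have hmu : (σ ^ m) v = u := by
    rcases hmv with hu | hv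
    · exact hu
    · exfalso
      have hnu : ∀ k : ℕ, (σ ^ k) v ≠ u := by
        intro k
        obtain ⟨r, hr, hre⟩ := pow_reduce hmpos hv k
        rw [hre]
        rcases Nat.eq_zero_or_pos r with rfl | hrpos
        · simpa using fun e => huv e.symm
        · exact (hmin r hrpos hr).1
      obtain ⟨k, -, hk⟩ := h.symm.exists_pow_eq'
      exact hnu k hk
  set σ' := σ * Equiv.swap u v with hσ'
  have h1 : σ' u = σ v := by rw [hσ', Equiv.Perm.mul_apply, Equiv.swap_apply_left]
  have hw := walk_lemma σ u v (m - 1) (fun i hi him => hmin i hi (by omega))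
  have hper : (σ' ^ m) u = u := by
    have hmm : m = (m - 1) + 1 := by omega
    rw [hmm, pow_succ, Equiv.Perm.mul_apply, h1, hw, ← hmm]
    exact hmu
  intro hsc
  obtain ⟨k, -, hk⟩ := hsc.exists_pow_eq'
  obtain ⟨r, hr, hre⟩ := pow_reduce hmpos hper k
  rw [hre] at hk
  rcases Nat.eq_zero_or_pos r with rfl | hrpos
  · simp at hk; exact huv hk
  · have : (σ' ^ r) u = (σ ^ r) v := by
      have hrr : r = (r - 1) + 1 := by omega
      rw [hrr, pow_succ, Equiv.Perm.mul_apply, h1,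
        walk_lemma σ u v (r - 1) (fun i hi him => hmin i hi (by omega)), ← hrr]
    rw [this] at hk
    exact (hmin r hrpos hr).2 hk

end Swap

/-- The join of a setoid with the pair relation `u ~ v`, described explicitly. -/
def joinPair (r : Setoid α) (u v : α) : Setoid α :=
  ⟨fun x y => r x y ∨ (r x u ∧ r v y) ∨ (r x v ∧ r u y), by
    constructor
    · exact fun x => Or.inl (r.refl x)
    · rintro x y (h | ⟨h1, h2⟩ | ⟨h1, h2⟩)
      · exact Or.inl (r.symm h)
      · exact Or.inr (Or.inr ⟨r.symm h2, r.symm h1⟩)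
      · exact Or.inr (Or.inl ⟨r.symm h2, r.symm h1⟩)
    · rintro x y z (h | ⟨h1, h2⟩ | ⟨h1, h2⟩) (h' | ⟨h1', h2'⟩ | ⟨h1', h2'⟩)
      · exact Or.inl (r.trans h h')
      · exact Or.inr (Or.inl ⟨r.trans h h1', h2'⟩)
      · exact Or.inr (Or.inr ⟨r.trans h h1', h2'⟩)
      · exact Or.inr (Or.inl ⟨h1, r.trans h2 h'⟩)
      · exact Or.inr (Or.inl ⟨h1, h2'⟩)
      · exact Or.inl (r.trans h1 h2')
      · exact Or.inr (Or.inr ⟨h1, r.trans h2 h'⟩)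
      · exact Or.inl (r.trans h1 h2')
      · exact Or.inr (Or.inr ⟨h1, h2'⟩)⟩

lemma joinPair_card [Finite α] (r : Setoid α) {u v : α} (huv : ¬ r u v) :
    Nat.card (Quotient (joinPair r u v)) + 1 = Nat.card (Quotient r) := by
  classical
  have hvu : ¬ r v u := fun h => huv (r.symm h)
  let g : α → {c : Quotient r // c ≠ Quotient.mk r u} := fun x =>
    if h : r x u then ⟨Quotient.mk r v, fun he => hvu (Quotient.exact he)⟩
    else ⟨Quotient.mk r x, fun he => h (Quotient.exact he)⟩
  have gwd : ∀ x y, (joinPair r u v) x y → g x = g y := by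
    rintro x y (h | ⟨h1, h2⟩ | ⟨h1, h2⟩) <;> simp only [g]
    · by_cases hxu : r x u <;> by_cases hyu : r y u
      · rw [dif_pos hxu, dif_pos hyu]
      · exact (hyu (r.trans (r.symm h) hxu)).elim
      · exact (hxu (r.trans h hyu)).elim
      · rw [dif_neg hxu, dif_neg hyu]
        exact Subtype.ext (Quotient.sound h)
    · by_cases hyu : r y u
      · exact (hvu (r.trans h2 hyu)).elim
      · rw [dif_pos h1, dif_neg hyu]
        exact Subtype.ext (Quotient.sound h2)
    · by_cases hxu : r x u
      · exact (huv (r.trans (r.symm hxu) h1)).elim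
      · have hyu : r y u := r.symm h2
        rw [dif_neg hxu, dif_pos hyu]
        exact Subtype.ext (Quotient.sound h1)
  let G : Quotient (joinPair r u v) → {c : Quotient r // c ≠ Quotient.mk r u} :=
    Quotient.lift g gwd
  let F : {c : Quotient r // c ≠ Quotient.mk r u} → Quotient (joinPair r u v) := fun c =>
    Quotient.lift (fun x => Quotient.mk (joinPair r u v) x)
      (fun x y h => Quotient.sound (Or.inl h)) c.1
  have hFG : ∀ c, F (G c) = c := by
    intro c
    induction c using Quotient.ind with
    | _ x =>
      show F (g x) = _
      by_cases hxu : r x u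
      · have hgx : g x = ⟨Quotient.mk r v, fun he => hvu (Quotient.exact he)⟩ := dif_pos hxu
        rw [hgx]
        exact Quotient.sound (Or.inr (Or.inr ⟨r.refl v, r.symm hxu⟩))
      · have hgx : g x = ⟨Quotient.mk r x, fun he => hxu (Quotient.exact he)⟩ := dif_neg hxu
        rw [hgx]
        rfl
  have hGF : ∀ c, G (F c) = c := by
    rintro ⟨c, hc⟩
    induction c using Quotient.ind with
    | _ x =>
      have hxu : ¬ r x u := fun h => hc (Quotient.sound h)
      show g x = _
      simp only [g]
      rw [dif_neg hxu]
  have hcong : Nat.card (Quotient (joinPair r u v))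
      = Nat.card {c : Quotient r // c ≠ Quotient.mk r u} :=
    Nat.card_congr ⟨G, F, hFG, hGF⟩
  rw [hcong]
  letI : Fintype (Quotient r) := Fintype.ofFinite _
  rw [Nat.card_eq_fintype_card, Nat.card_eq_fintype_card,
    Fintype.card_subtype_compl (fun c => c = Quotient.mk r u), Fintype.card_subtype_eq]
  have : 0 < Fintype.card (Quotient r) := Fintype.card_pos_iff.mpr ⟨Quotient.mk r u⟩
  omega

section Swap2
variable [Fintype α] [DecidableEq α]

lemma orbitSetoid_merge {σ : Equiv.Perm α} {u v : α} (huv : u ≠ v)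
    (h : ¬ σ.SameCycle u v) :
    orbitSetoid (σ * Equiv.swap u v) = joinPair (orbitSetoid σ) u v := by
  have hscuv := sameCycle_mul_swap_of_not_sameCycle h
  apply Setoid.ext
  intro x y
  constructor
  · intro hxy
    refine rel_of_step (joinPair (orbitSetoid σ) u v) (σ * Equiv.swap u v) ?_ hxy
    intro z
    by_cases hzu : z = u
    · refine Or.inr (Or.inl ⟨?_, ?_⟩)
      · show σ.SameCycle z u
        rw [hzu]
      · show σ.SameCycle v ((σ * Equiv.swap u v) z)
        rw [Equiv.Perm.mul_apply, hzu, Equiv.swap_apply_left]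
        exact sameCycle_apply_self σ v
    · by_cases hzv : z = v
      · refine Or.inr (Or.inr ⟨?_, ?_⟩)
        · show σ.SameCycle z v
          rw [hzv]
        · show σ.SameCycle u ((σ * Equiv.swap u v) z)
          rw [Equiv.Perm.mul_apply, hzv, Equiv.swap_apply_right]
          exact sameCycle_apply_self σ u
      · refine Or.inl ?_
        show σ.SameCycle z _
        rw [Equiv.Perm.mul_apply, Equiv.swap_apply_of_ne_of_ne hzu hzv]
        exact sameCycle_apply_self σ z
  · intro hxy
    have hle : ∀ {a b : α}, σ.SameCycle a b → (σ * Equiv.swap u v).SameCycle a b := by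
      intro a b hab
      refine rel_of_step (orbitSetoid (σ * Equiv.swap u v)) σ ?_ hab
      intro z
      by_cases hzu : z = u
      · have e : σ z = (σ * Equiv.swap u v) v := by
          rw [Equiv.Perm.mul_apply, Equiv.swap_apply_right, hzu]
        rw [e, hzu]
        exact hscuv.trans (sameCycle_apply_self _ v)
      · by_cases hzv : z = v
        · have e : σ z = (σ * Equiv.swap u v) u := by
            rw [Equiv.Perm.mul_apply, Equiv.swap_apply_left, hzv]
          rw [e, hzv]
          exact hscuv.symm.trans (sameCycle_apply_self _ u)
        · have e : σ z = (σ * Equiv.swap u v) z := by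
            rw [Equiv.Perm.mul_apply, Equiv.swap_apply_of_ne_of_ne hzu hzv]
          rw [e]
          exact sameCycle_apply_self _ z
    rcases hxy with h1 | ⟨h1, h2⟩ | ⟨h1, h2⟩
    · exact hle h1
    · exact ((hle h1).trans hscuv).trans (hle h2)
    · exact ((hle h1).trans hscuv.symm).trans (hle h2)

lemma numOrbits_mul_swap_merge {σ : Equiv.Perm α} {u v : α} (huv : u ≠ v)
    (h : ¬ σ.SameCycle u v) :
    numOrbits (σ * Equiv.swap u v) + 1 = numOrbits σ := by
  rw [numOrbits, orbitSetoid_merge huv h]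
  exact joinPair_card _ h

lemma numOrbits_mul_swap_split {σ : Equiv.Perm α} {u v : α} (huv : u ≠ v)
    (h : σ.SameCycle u v) :
    numOrbits (σ * Equiv.swap u v) = numOrbits σ + 1 := by
  have h2 := not_sameCycle_mul_swap_of_sameCycle huv h
  have h3 := numOrbits_mul_swap_merge huv h2
  rw [mul_assoc, Equiv.swap_mul_self, mul_one] at h3
  omega

lemma numOrbits_swap_mul_split {σ : Equiv.Perm α} {a b : α} (hab : a ≠ b)
    (h : σ.SameCycle a b) :
    numOrbits (Equiv.swap a b * σ) = numOrbits σ + 1 := by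
  rw [Equiv.swap_mul_eq_mul_swap]
  apply numOrbits_mul_swap_split
  · intro he
    exact hab (σ⁻¹.injective he)
  · have h1 : σ.SameCycle (σ⁻¹ a) a := ⟨1, by simp⟩
    have h2 : σ.SameCycle b (σ⁻¹ b) := ⟨-1, by simp⟩
    exact (h1.trans h).trans h2

end Swap2

section OrbitBound
variable [Fintype α] [DecidableEq α]

/-- Fixed points embed into orbit classes. -/
lemma sameCycle_two_cycle {π : Equiv.Perm α} {x y : α} [Finite α]
    (h2 : π (π x) = x) (h : π.SameCycle x y) : y = x ∨ y = π x := by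
  obtain ⟨k, -, hk⟩ := h.exists_pow_eq'
  clear h
  subst hk
  induction k with
  | zero => left; simp
  | succ n ih =>
    rw [pow_succ', Equiv.Perm.mul_apply]
    rcases ih with he | he
    · right; rw [he]
    · left; rw [he, h2]

lemma orbit_bound (π : Equiv.Perm α) :
    (2 * numOrbits π ≤ Fintype.card α + Nat.card {x : α // π x = x}) ∧
    (∀ x₀ : α, π (π x₀) ≠ x₀ →
      2 * numOrbits π + 1 ≤ Fintype.card α + Nat.card {x : α // π x = x}) := by
  classical
  set r := orbitSetoid π with hr
  letI : Fintype (Quotient r) := Fintype.ofFinite _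
  set fib : Quotient r → ℕ := fun c => Nat.card {y : α // Quotient.mk r y = c} with hfib
  have hcardsum : Fintype.card α = Finset.univ.sum fib := by
    have e1 : Fintype.card α
        = Fintype.card (Σ c : Quotient r, {y : α // Quotient.mk r y = c}) :=
      Fintype.card_congr (Equiv.sigmaFiberEquiv (fun y : α => Quotient.mk r y)).symm
    rw [e1, Fintype.card_sigma]
    exact Finset.sum_congr rfl (fun c _ => (Nat.card_eq_fintype_card).symm)
  set S : Finset (Quotient r) :=
    Finset.univ.filter (fun c => ∃ x, π x = x ∧ Quotient.mk r x = c) with hS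
  have hfib1 : ∀ c ∈ S, 1 ≤ fib c := by
    intro c _
    obtain ⟨x, rfl⟩ := Quotient.exists_rep c
    have : Nonempty {y : α // Quotient.mk r y = Quotient.mk r x} := ⟨⟨x, rfl⟩⟩
    exact Nat.card_pos
  have hfib2 : ∀ c ∈ Sᶜ, 2 ≤ fib c := by
    intro c hc
    rw [Finset.mem_compl] at hc
    obtain ⟨x, rfl⟩ := Quotient.exists_rep c
    have hxfix : π x ≠ x := by
      intro hfix
      exact hc (Finset.mem_filter.mpr ⟨Finset.mem_univ _, x, hfix, rfl⟩)
    show 2 ≤ Nat.card {y : α // Quotient.mk r y = Quotient.mk r x}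
    rw [Nat.card_eq_fintype_card]
    have h1 : (1 : ℕ) < Fintype.card {y : α // Quotient.mk r y = Quotient.mk r x} := by
      rw [Fintype.one_lt_card_iff]
      refine ⟨⟨π x, Quotient.sound (sameCycle_apply_self π x).symm⟩, ⟨x, rfl⟩, ?_⟩
      simp only [ne_eq, Subtype.mk.injEq]
      exact hxfix
    omega
  have hScard : S.card ≤ Nat.card {x : α // π x = x} := by
    rw [Nat.card_eq_fintype_card, Fintype.card_subtype]
    have hφ : ∀ c ∈ S, ∃ x, π x = x ∧ Quotient.mk r x = c := by
      intro c hc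
      exact (Finset.mem_filter.mp hc).2
    choose φ hφ1 hφ2 using hφ
    by_cases hne : Nonempty α
    · apply Finset.card_le_card_of_injOn
        (fun c => if h : c ∈ S then φ c h else Classical.arbitrary α)
      · intro c hc
        have hc' : c ∈ S := by simpa using hc
        simp only [dif_pos hc']
        exact Finset.mem_filter.mpr ⟨Finset.mem_univ _, hφ1 c hc'⟩
      · intro c hc d hd he
        rw [Finset.mem_coe] at hc hd
        simp only [dif_pos hc, dif_pos hd] at he
        rw [← hφ2 c hc, ← hφ2 d hd, he]
    · have hSe : S = ∅ := by
        rw [Finset.eq_empty_iff_forall_notMem]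
        intro c hc
        obtain ⟨x, -, -⟩ := (Finset.mem_filter.mp hc).2
        exact hne ⟨x⟩
      simp [hSe]
  have hsum : S.sum fib + Sᶜ.sum fib = Finset.univ.sum fib :=
    Finset.sum_add_sum_compl S fib
  have hcards : S.card + Sᶜ.card = Fintype.card (Quotient r) := Finset.card_add_card_compl S
  have hb1 : S.card ≤ S.sum fib := by
    simpa using Finset.card_nsmul_le_sum S fib 1 hfib1
  have hb2 : Sᶜ.card * 2 ≤ Sᶜ.sum fib := by
    simpa [smul_eq_mul] using Finset.card_nsmul_le_sum Sᶜ fib 2 hfib2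
  have hN : numOrbits π = Fintype.card (Quotient r) := Nat.card_eq_fintype_card
  constructor
  · omega
  · intro x₀ hx₀
    have hpx₀ : π x₀ ≠ x₀ := fun h => hx₀ (by rw [h, h])
    have hc₀mem : Quotient.mk r x₀ ∈ Sᶜ := by
      rw [Finset.mem_compl]
      intro hmem
      obtain ⟨y, hyfix, hyc⟩ := (Finset.mem_filter.mp hmem).2
      have := fixed_point_sameCycle hyfix (Quotient.exact hyc)
      rw [← this] at hpx₀
      exact hpx₀ hyfix
    have hfib3 : 3 ≤ fib (Quotient.mk r x₀) := by
      show 3 ≤ Nat.card {y : α // Quotient.mk r y = Quotient.mk r x₀}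
      rw [Nat.card_eq_fintype_card]
      have h2 : (2 : ℕ) < Fintype.card {y : α // Quotient.mk r y = Quotient.mk r x₀} := by
        rw [Fintype.two_lt_card_iff]
        refine ⟨⟨x₀, rfl⟩, ⟨π x₀, Quotient.sound (sameCycle_apply_self π x₀).symm⟩,
          ⟨π (π x₀), Quotient.sound
            (((sameCycle_apply_self π x₀).trans (sameCycle_apply_self π (π x₀))).symm)⟩,
          ?_, ?_, ?_⟩ <;> simp only [ne_eq, Subtype.mk.injEq]
        · exact fun h => hpx₀ h.symm
        · exact fun h => hx₀ h.symm
        · intro h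
          exact hpx₀ (π.injective h.symm)
      omega
    have he' : fib (Quotient.mk r x₀) + (Sᶜ.erase (Quotient.mk r x₀)).sum fib = Sᶜ.sum fib :=
      Finset.add_sum_erase Sᶜ fib hc₀mem
    have hbe : (Sᶜ.erase (Quotient.mk r x₀)).card * 2 ≤ (Sᶜ.erase (Quotient.mk r x₀)).sum fib := by
      simpa [smul_eq_mul] using Finset.card_nsmul_le_sum (Sᶜ.erase (Quotient.mk r x₀)) fib 2
        (fun c hc => hfib2 c (Finset.mem_of_mem_erase hc))
    have hce : (Sᶜ.erase (Quotient.mk r x₀)).card = Sᶜ.card - 1 :=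
      Finset.card_erase_of_mem hc₀mem
    have hpos : 1 ≤ Sᶜ.card := Finset.card_pos.mpr ⟨_, hc₀mem⟩
    omega

end OrbitBound

section Core
variable [Fintype α] [DecidableEq α]

lemma spres_swap {τ : Equiv.Perm α} {s : α → Bool} (hs : ∀ x, s (τ x) = s x) (y : α) :
    ∀ x, s ((Equiv.swap y (τ y) * τ) x) = s x := by
  intro x
  rw [Equiv.Perm.mul_apply]
  by_cases h1 : τ x = y
  · rw [h1, Equiv.swap_apply_left, hs, ← h1, hs]
  · by_cases h2 : τ x = τ y
    · have hxy : x = y := τ.injective h2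
      rw [h2, Equiv.swap_apply_right, hxy]
    · rw [Equiv.swap_apply_of_ne_of_ne h1 h2, hs]

/-- same-cycle is preserved by deleting a (non-fixed) point `g` distinct from `x, y`. -/
lemma sameCycle_deletion {π : Equiv.Perm α} {g : α} (hg : π g ≠ g) {x y : α}
    (hx : x ≠ g) (hy : y ≠ g) (h : π.SameCycle x y) :
    (Equiv.swap g (π g) * π).SameCycle x y := by
  set π₁ := Equiv.swap g (π g) * π with hπ₁
  obtain ⟨k, -, hk⟩ := h.exists_pow_eq'
  have main : ∀ k : ℕ, ((π ^ k) x = g ∧ ∃ m : ℕ, (π₁ ^ m) x = (π ^ (k+1)) x)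
      ∨ ((π ^ k) x ≠ g ∧ ∃ m : ℕ, (π₁ ^ m) x = (π ^ k) x) := by
    intro k
    induction k with
    | zero => exact Or.inr ⟨by simpa using hx, 0, by simp⟩
    | succ n ih =>
      rcases ih with ⟨hz, m, hm⟩ | ⟨hz, m, hm⟩
      · refine Or.inr ⟨?_, m, hm⟩
        rw [pow_succ', Equiv.Perm.mul_apply, hz]
        exact hg
      · by_cases hπz : π ((π ^ n) x) = g
        · refine Or.inl ⟨by rw [pow_succ', Equiv.Perm.mul_apply]; exact hπz, m + 1, ?_⟩
          have hR : (π ^ (n+1+1)) x = π g := by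
            rw [pow_succ' π (n+1), Equiv.Perm.mul_apply, pow_succ' π n,
              Equiv.Perm.mul_apply, hπz]
          rw [hR, pow_succ', Equiv.Perm.mul_apply, hm, hπ₁, Equiv.Perm.mul_apply, hπz,
            Equiv.swap_apply_left]
        · refine Or.inr ⟨by rw [pow_succ', Equiv.Perm.mul_apply]; exact hπz, m + 1, ?_⟩
          have hR : (π ^ (n+1)) x = π ((π ^ n) x) := by
            rw [pow_succ', Equiv.Perm.mul_apply]
          have hne2 : π ((π ^ n) x) ≠ π g := fun he => hz (π.injective he)
          rw [hR, pow_succ', Equiv.Perm.mul_apply, hm, hπ₁, Equiv.Perm.mul_apply,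
            Equiv.swap_apply_of_ne_of_ne hπz hne2]
  rcases main k with ⟨hz, -⟩ | ⟨-, m, hm⟩
  · rw [hk] at hz
    exact (hy hz).elim
  · rw [hk] at hm
    exact sameCycle_of_pow hm

end Core

section Main
variable [Fintype α] [DecidableEq α]

lemma core (s : α → Bool) :
    ∀ N : ℕ, ∀ π τ : Equiv.Perm α,
      Set.ncard {x : α | π x ≠ x ∨ (π⁻¹ * τ) x ≠ x} ≤ N →
      (∀ x, s (τ x) = s x) →
      Fintype.card α + numOrbits τ ≤ numOrbits π + numOrbits (π⁻¹ * τ) + 2 →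
      ∀ a₁ a₂ : α, a₁ ≠ a₂ → π.SameCycle a₁ a₂ → s a₁ = s a₂ →
        s (π a₁) ≠ s a₁ → s (π a₂) ≠ s a₂ → False := by
  intro N
  induction N with
  | zero =>
    intro π τ hact hs H a₁ a₂ hne hsc hs12 hc1 hc2
    have ha : π a₁ ≠ a₁ := fun h => hc1 (by rw [h])
    have hpos : 0 < Set.ncard {x : α | π x ≠ x ∨ (π⁻¹ * τ) x ≠ x} :=
      (Set.ncard_pos (Set.toFinite _)).mpr ⟨a₁, Or.inl ha⟩
    omega
  | succ N ih =>
    intro π τ hact hs H a₁ a₂ hne hsc hs12 hc1 hc2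
    set σ := π⁻¹ * τ with hσdef
    have hτσ : ∀ z, τ z = π (σ z) := by
      intro z
      rw [hσdef, Equiv.Perm.mul_apply, Equiv.Perm.coe_inv, Equiv.apply_symm_apply]
    by_cases hmv1 : ∃ f, π f = f ∧ σ f ≠ f
    · -- Move 1 : delete a π-fixed, σ-active point f
      obtain ⟨f, hπf, hσf⟩ := hmv1
      have hτf : τ f ≠ f := by
        intro h
        apply hσf
        rw [hσdef, Equiv.Perm.mul_apply, h]
        rw [← hπf, Equiv.Perm.coe_inv, Equiv.symm_apply_apply, hπf]
      set τ₁ := Equiv.swap f (τ f) * τ with hτ₁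
      have hπinvf : π⁻¹ f = f := by
        apply π.injective
        rw [Equiv.Perm.coe_inv, Equiv.apply_symm_apply, hπf]
      have hσfτ : σ f = π⁻¹ (τ f) := by rw [hσdef, Equiv.Perm.mul_apply]
      have key : Equiv.swap (π⁻¹ f) (π⁻¹ (τ f)) * π⁻¹ = π⁻¹ * Equiv.swap f (τ f) := by
        rw [Equiv.swap_mul_eq_mul_swap π⁻¹ (π⁻¹ f) (π⁻¹ (τ f))]
        simp
      have hσ₁ : π⁻¹ * τ₁ = Equiv.swap f (σ f) * σ := by
        rw [hτ₁, ← mul_assoc, ← key, hπinvf, ← hσfτ, mul_assoc, hσdef]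
      have hσcount : numOrbits (π⁻¹ * τ₁) = numOrbits σ + 1 := by
        rw [hσ₁]
        exact numOrbits_swap_mul_split (Ne.symm hσf) (sameCycle_apply_self σ f)
      have hτcount : numOrbits τ₁ = numOrbits τ + 1 := by
        rw [hτ₁]
        exact numOrbits_swap_mul_split (Ne.symm hτf) (sameCycle_apply_self τ f)
      have H₁ : Fintype.card α + numOrbits τ₁ ≤ numOrbits π + numOrbits (π⁻¹ * τ₁) + 2 := by
        omega
      have hs₁ : ∀ x, s (τ₁ x) = s x := spres_swap hs f
      have hsub : {x : α | π x ≠ x ∨ (π⁻¹ * τ₁) x ≠ x}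
          ⊆ {x : α | π x ≠ x ∨ σ x ≠ x} := by
        intro x hx
        rcases hx with hπx | hσ₁x
        · exact Or.inl hπx
        · rw [hσ₁] at hσ₁x
          right
          intro hσx
          apply hσ₁x
          rw [Equiv.Perm.mul_apply, hσx]
          rcases eq_or_ne x f with rfl | hxf
          · exact (hσf hσx).elim
          · rcases eq_or_ne x (σ f) with rfl | hxσf
            · exfalso
              apply hσf
              exact σ.injective hσx
            · exact Equiv.swap_apply_of_ne_of_ne hxf hxσf
      have hfnew : f ∉ {x : α | π x ≠ x ∨ (π⁻¹ * τ₁) x ≠ x} := by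
        intro hf
        rcases hf with hπx | hσ₁x
        · exact hπx hπf
        · apply hσ₁x
          rw [hσ₁, Equiv.Perm.mul_apply, Equiv.swap_apply_right]
      have hfold : f ∈ {x : α | π x ≠ x ∨ σ x ≠ x} := Or.inr hσf
      have hlt : Set.ncard {x : α | π x ≠ x ∨ (π⁻¹ * τ₁) x ≠ x}
          < Set.ncard {x : α | π x ≠ x ∨ σ x ≠ x} :=
        Set.ncard_lt_ncard ((Set.ssubset_iff_of_subset hsub).mpr ⟨f, hfold, hfnew⟩)
          (Set.toFinite _)
      exact ih π τ₁ (by omega) hs₁ H₁ a₁ a₂ hne hsc hs12 hc1 hc2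
    · by_cases hmv2 : ∃ g, σ g = g ∧ π g ≠ g
      · -- Move 2 : delete a σ-fixed, π-active point g
        obtain ⟨g, hσg, hπg⟩ := hmv2
        have hτg : τ g = π g := by rw [hτσ g, hσg]
        set π₁ := Equiv.swap g (π g) * π with hπ₁
        set τ₁ := Equiv.swap g (τ g) * τ with hτ₁
        have hσeq : π₁⁻¹ * τ₁ = σ := by
          rw [hπ₁, hτ₁, hτg, mul_inv_rev, Equiv.swap_inv, mul_assoc,
            ← mul_assoc (Equiv.swap g (π g)) (Equiv.swap g (π g)) τ,
            Equiv.swap_mul_self, one_mul, hσdef]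
        have hπcount : numOrbits π₁ = numOrbits π + 1 := by
          rw [hπ₁]
          exact numOrbits_swap_mul_split (Ne.symm hπg) (sameCycle_apply_self π g)
        have hτcount : numOrbits τ₁ = numOrbits τ + 1 := by
          rw [hτ₁]
          have : τ g ≠ g := by rw [hτg]; exact hπg
          exact numOrbits_swap_mul_split (Ne.symm this) (sameCycle_apply_self τ g)
        have H₁ : Fintype.card α + numOrbits τ₁ ≤ numOrbits π₁ + numOrbits (π₁⁻¹ * τ₁) + 2 := by
          rw [hσeq]
          omega
        have hs₁ : ∀ x, s (τ₁ x) = s x := spres_swap hs g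
        have hag : ∀ a : α, s (π a) ≠ s a → a ≠ g := by
          intro a hc he
          apply hc
          rw [he, ← hτg, hs]
        have ha₁g := hag a₁ hc1
        have ha₂g := hag a₂ hc2
        have hπs : ∀ a : α, a ≠ g → s (π₁ a) = s (π a) := by
          intro a hga
          rw [hπ₁, Equiv.Perm.mul_apply]
          rcases eq_or_ne (π a) g with hpag | hpag
          · rw [hpag, Equiv.swap_apply_left, ← hτg, hs, ← hpag]
          · have hpag2 : π a ≠ π g := fun he => hga (π.injective he)
            rw [Equiv.swap_apply_of_ne_of_ne hpag hpag2]
        have hsc₁ : π₁.SameCycle a₁ a₂ := by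
          rw [hπ₁]
          exact sameCycle_deletion hπg ha₁g ha₂g hsc
        have hc1' : s (π₁ a₁) ≠ s a₁ := by rw [hπs a₁ ha₁g]; exact hc1
        have hc2' : s (π₁ a₂) ≠ s a₂ := by rw [hπs a₂ ha₂g]; exact hc2
        have hsub : {x : α | π₁ x ≠ x ∨ (π₁⁻¹ * τ₁) x ≠ x}
            ⊆ {x : α | π x ≠ x ∨ σ x ≠ x} := by
          intro x hx
          rcases hx with hπ₁x | hσ₁x
          · left
            intro hπx
            apply hπ₁x
            rw [hπ₁, Equiv.Perm.mul_apply, hπx]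
            rcases eq_or_ne x g with rfl | hxg
            · exact (hπg hπx).elim
            · rcases eq_or_ne x (π g) with rfl | hxπg
              · exact (hπg (π.injective hπx)).elim
              · exact Equiv.swap_apply_of_ne_of_ne hxg hxπg
          · rw [hσeq] at hσ₁x
            exact Or.inr hσ₁x
        have hgnew : g ∉ {x : α | π₁ x ≠ x ∨ (π₁⁻¹ * τ₁) x ≠ x} := by
          intro hg
          rcases hg with hπ₁x | hσ₁x
          · apply hπ₁x
            rw [hπ₁, Equiv.Perm.mul_apply, Equiv.swap_apply_right]
          · rw [hσeq] at hσ₁x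
            exact hσ₁x hσg
        have hgold : g ∈ {x : α | π x ≠ x ∨ σ x ≠ x} := Or.inl hπg
        have hlt : Set.ncard {x : α | π₁ x ≠ x ∨ (π₁⁻¹ * τ₁) x ≠ x}
            < Set.ncard {x : α | π x ≠ x ∨ σ x ≠ x} :=
          Set.ncard_lt_ncard ((Set.ssubset_iff_of_subset hsub).mpr ⟨g, hgold, hgnew⟩)
            (Set.toFinite _)
        exact ih π₁ τ₁ (by omega) hs₁ H₁ a₁ a₂ hne hsc₁ hs12 hc1' hc2'
      · -- Terminal case
        push_neg at hmv1 hmv2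
        have hπa₁ : π a₁ ≠ a₁ := fun h => hc1 (by rw [h])
        by_cases hsq : π (π a₁) = a₁
        · rcases sameCycle_two_cycle hsq hsc with h | h
          · exact hne h.symm
          · apply hc1
            rw [← h, ← hs12]
        · -- counting contradiction
          have hFeq : Nat.card {x : α // π x = x} = Nat.card {x : α // σ x = x} :=
            Nat.card_congr (Equiv.subtypeEquivRight (fun x => ⟨hmv1 x, hmv2 x⟩))
          have hτfix : ∀ c : α, π c = c → τ c = c := by
            intro c hc
            rw [hτσ c, hmv1 c hc, hc]
          have hπa₁2 : π (π a₁) ≠ π a₁ := fun h => hπa₁ (π.injective h)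
          -- numOrbits τ ≥ F + 2
          have hτbound : Nat.card {x : α // π x = x} + 2 ≤ numOrbits τ := by
            classical
            set J : {x : α // π x = x} ⊕ Bool → Quotient (orbitSetoid τ) :=
              fun z => match z with
                | Sum.inl c => Quotient.mk (orbitSetoid τ) c.1
                | Sum.inr b => if b then Quotient.mk (orbitSetoid τ) a₁
                    else Quotient.mk (orbitSetoid τ) (π a₁) with hJ
            have hfixQ : ∀ (c : α), π c = c → ∀ y : α,
                Quotient.mk (orbitSetoid τ) c = Quotient.mk (orbitSetoid τ) y → c = y := by
              intro c hc y hq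
              exact fixed_point_sameCycle (hτfix c hc) (Quotient.exact hq)
            have hside : Quotient.mk (orbitSetoid τ) a₁ ≠ Quotient.mk (orbitSetoid τ) (π a₁) := by
              intro h
              exact hc1 (sameCycle_side hs (Quotient.exact h)).symm
            have hJinj : Function.Injective J := by
              rintro (⟨c, hc⟩ | b) (⟨d, hd⟩ | b') h
              · exact congrArg Sum.inl (Subtype.ext (hfixQ c hc d h))
              · exfalso
                rcases b' with _ | _
                · simp only [hJ, if_neg, Bool.false_eq_true, if_false] at h
                  have := hfixQ c hc (π a₁) h
                  rw [← this] at hπa₁2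
                  exact hπa₁2 hc
                · simp only [hJ, if_pos] at h
                  have := hfixQ c hc a₁ h
                  rw [← this] at hπa₁
                  exact hπa₁ hc
              · exfalso
                rcases b with _ | _
                · simp only [hJ, if_neg, Bool.false_eq_true, if_false] at h
                  have := hfixQ d hd (π a₁) h.symm
                  rw [← this] at hπa₁2
                  exact hπa₁2 hd
                · simp only [hJ, if_pos] at h
                  have := hfixQ d hd a₁ h.symm
                  rw [← this] at hπa₁
                  exact hπa₁ hd
              · rcases b with _ | _ <;> rcases b' with _ | _
                · rfl
                · exfalso
                  simp only [hJ, if_pos, Bool.false_eq_true, if_false] at h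
                  exact hside h.symm
                · exfalso
                  simp only [hJ, if_pos, Bool.false_eq_true, if_false] at h
                  exact hside h
                · rfl
            have := Nat.card_le_card_of_injective J hJinj
            rw [Nat.card_sum] at this
            have hbool : Nat.card Bool = 2 := by
              rw [Nat.card_eq_fintype_card]
              simp
            rw [hbool] at this
            exact this
          have hb1 := (orbit_bound π).1
          have hb2 := (orbit_bound σ).1
          have hb3 := (orbit_bound π).2 a₁ hsq
          omega

end Main

section Tau

/-- `tauPQ` needs the other definitions from the preamble; restate it here for development. -/
lemma tauPQ_apply_left' {p q : ℕ} (i : Fin p) :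
    tauPQ p q (finSumFinEquiv (Sum.inl i)) = finSumFinEquiv (Sum.inl (finRotate p i)) := by
  rw [tauPQ, Equiv.permCongr_apply]
  simp

lemma tauPQ_apply_right' {p q : ℕ} (j : Fin q) :
    tauPQ p q (finSumFinEquiv (Sum.inr j)) = finSumFinEquiv (Sum.inr (finRotate q j)) := by
  rw [tauPQ, Equiv.permCongr_apply]
  simp

lemma tauPQ_pow_left {p q : ℕ} (k : ℕ) (i : Fin p) :
    ((tauPQ p q) ^ k) (finSumFinEquiv (Sum.inl i))
      = finSumFinEquiv (Sum.inl (((finRotate p) ^ k) i)) := by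
  induction k with
  | zero => simp
  | succ n ih =>
    rw [pow_succ', Equiv.Perm.mul_apply, ih, tauPQ_apply_left',
      pow_succ' (finRotate p) n, Equiv.Perm.mul_apply]

lemma fin_decompose_left {p q : ℕ} (x : Fin (p + q)) (hx : (x : ℕ) < p) :
    ∃ i : Fin p, x = finSumFinEquiv (Sum.inl i) ∧ (i : ℕ) = (x : ℕ) := by
  rcases h : finSumFinEquiv.symm x with i | j
  · refine ⟨i, ?_, ?_⟩
    · rw [← h, Equiv.apply_symm_apply]
    · have : finSumFinEquiv (Sum.inl i) = x := by rw [← h, Equiv.apply_symm_apply]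
      rw [← this, finSumFinEquiv_apply_left, Fin.coe_castAdd]
  · exfalso
    have : finSumFinEquiv (Sum.inr j) = x := by rw [← h, Equiv.apply_symm_apply]
    rw [← this, finSumFinEquiv_apply_right, Fin.coe_natAdd] at hx
    omega

lemma fin_decompose_right {p q : ℕ} (x : Fin (p + q)) (hx : p ≤ (x : ℕ)) :
    ∃ j : Fin q, x = finSumFinEquiv (Sum.inr j) := by
  rcases h : finSumFinEquiv.symm x with i | j
  · exfalso
    have : finSumFinEquiv (Sum.inl i) = x := by rw [← h, Equiv.apply_symm_apply]
    rw [← this, finSumFinEquiv_apply_left, Fin.coe_castAdd] at hx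
    omega
  · refine ⟨j, ?_⟩
    rw [← h, Equiv.apply_symm_apply]

lemma tauPQ_side {p q : ℕ} (x : Fin (p + q)) :
    ((tauPQ p q x : ℕ) < p ↔ (x : ℕ) < p) := by
  by_cases hx : (x : ℕ) < p
  · obtain ⟨i, rfl, -⟩ := fin_decompose_left x hx
    rw [tauPQ_apply_left', finSumFinEquiv_apply_left, finSumFinEquiv_apply_left]
    simp only [Fin.coe_castAdd]
    exact iff_of_true (finRotate p i).isLt i.isLt
  · push_neg at hx
    obtain ⟨j, rfl⟩ := fin_decompose_right x hx
    rw [tauPQ_apply_right', finSumFinEquiv_apply_right]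
    rw [finSumFinEquiv_apply_right] at hx ⊢
    simp only [Fin.coe_natAdd]
    constructor <;> intro h <;> omega

open Fin.NatCast in
lemma finRotate_reaches {m : ℕ} (i j : Fin m) : ∃ k : ℕ, ((finRotate m) ^ k) i = j := by
  rcases m with - | m
  · exact i.elim0
  · have hpow : ∀ k : ℕ, ((finRotate (m+1)) ^ k) i = i + (k : Fin (m+1)) := by
      intro k
      induction k with
      | zero => simp
      | succ n ih =>
        rw [pow_succ', Equiv.Perm.mul_apply, ih, finRotate_succ_apply]
        rw [Nat.cast_add, Nat.cast_one, add_assoc]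
    refine ⟨(j - i).val, ?_⟩
    rw [hpow, Fin.cast_val_eq_self]
    abel

lemma tauPQ_sameCycle_left {p q : ℕ} (x y : Fin (p + q)) (hx : (x : ℕ) < p)
    (hy : (y : ℕ) < p) : (tauPQ p q).SameCycle x y := by
  obtain ⟨i, rfl, -⟩ := fin_decompose_left x hx
  obtain ⟨i', rfl, -⟩ := fin_decompose_left y hy
  obtain ⟨k, hk⟩ := finRotate_reaches i i'
  exact sameCycle_of_pow (by rw [tauPQ_pow_left, hk])

lemma tauPQ_pow_right {p q : ℕ} (k : ℕ) (j : Fin q) :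
    ((tauPQ p q) ^ k) (finSumFinEquiv (Sum.inr j))
      = finSumFinEquiv (Sum.inr (((finRotate q) ^ k) j)) := by
  induction k with
  | zero => simp
  | succ n ih =>
    rw [pow_succ', Equiv.Perm.mul_apply, ih, tauPQ_apply_right',
      pow_succ' (finRotate q) n, Equiv.Perm.mul_apply]

lemma tauPQ_sameCycle_right {p q : ℕ} (x y : Fin (p + q)) (hx : p ≤ (x : ℕ))
    (hy : p ≤ (y : ℕ)) : (tauPQ p q).SameCycle x y := by
  obtain ⟨j, rfl⟩ := fin_decompose_right x hx
  obtain ⟨j', rfl⟩ := fin_decompose_right y hy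
  obtain ⟨k, hk⟩ := finRotate_reaches j j'
  exact sameCycle_of_pow (by rw [tauPQ_pow_right, hk])

lemma tauPQ_numOrbits {p q : ℕ} (hp : 1 ≤ p) (hq : 1 ≤ q) :
    numOrbits (tauPQ p q) = 2 := by
  have hps : ∀ x : Fin (p+q), decide (((tauPQ p q x) : ℕ) < p) = decide ((x : ℕ) < p) := by
    intro x
    simp only [decide_eq_decide]
    exact tauPQ_side x
  have h0 : (0 : ℕ) < p + q := by omega
  have hpq : p < p + q := by omega
  set x₀ : Fin (p+q) := ⟨0, h0⟩ with hx₀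
  set x₁ : Fin (p+q) := ⟨p, hpq⟩ with hx₁
  have e : Quotient (orbitSetoid (tauPQ p q)) ≃ Bool := by
    refine ⟨Quotient.lift (fun z : Fin (p+q) => decide ((z : ℕ) < p)) ?_,
      fun b => if b then Quotient.mk _ x₀ else Quotient.mk _ x₁, ?_, ?_⟩
    · intro a b hab
      have := sameCycle_side (τ := tauPQ p q) (s := fun z : Fin (p+q) => decide ((z : ℕ) < p))
        hps (hab : (tauPQ p q).SameCycle a b)
      simpa using this
    · intro c
      induction c using Quotient.ind with
      | _ z =>
        by_cases hz : (z : ℕ) < p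
        · have : decide ((z : ℕ) < p) = true := by simpa using hz
          simp only [Quotient.lift_mk, this, if_pos]
          exact Quotient.sound (tauPQ_sameCycle_left x₀ z (by show 0 < p; omega) hz)
        · have : decide ((z : ℕ) < p) = false := by simpa using hz
          simp only [Quotient.lift_mk, this, Bool.false_eq_true, if_false]
          push_neg at hz
          exact Quotient.sound (tauPQ_sameCycle_right x₁ z (by show p ≤ p; exact le_rfl) hz)
    · intro b
      rcases b with - | -
      · simp only [Bool.false_eq_true, if_false, Quotient.lift_mk, decide_eq_false_iff_not]
        show ¬ (p < p)
        omega
      · simp only [if_pos, Quotient.lift_mk, decide_eq_true_eq]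
        show 0 < p
        omega
  rw [numOrbits, Nat.card_congr e, Nat.card_eq_fintype_card]
  simp

end Tau

section Final

lemma numJoin_eq_one {p q : ℕ} (π : Equiv.Perm (Fin (p+q)))
    (a b : Fin (p+q)) (hab : π.SameCycle a b) (ha : (a : ℕ) < p) (hb : p ≤ (b : ℕ)) :
    numJoin π (tauPQ p q) = 1 := by
  set r := orbitSetoid π ⊔ orbitSetoid (tauPQ p q) with hr
  have h1 : ∀ {x y : Fin (p+q)}, π.SameCycle x y → r x y := fun h =>
    Setoid.le_def.mp le_sup_left h
  have h2 : ∀ {x y : Fin (p+q)}, (tauPQ p q).SameCycle x y → r x y := fun h =>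
    Setoid.le_def.mp le_sup_right h
  have hall : ∀ z : Fin (p+q), r z a := by
    intro z
    by_cases hz : (z : ℕ) < p
    · exact h2 (tauPQ_sameCycle_left z a hz ha)
    · push_neg at hz
      exact r.trans (h2 (tauPQ_sameCycle_right z b hz hb)) (r.symm (h1 hab))
  rw [numJoin, Nat.card_eq_one_iff_unique]
  constructor
  · constructor
    intro c d
    induction c using Quotient.ind with
    | _ x =>
      induction d using Quotient.ind with
      | _ y => exact Quotient.sound (r.trans (hall x) (r.symm (hall y)))
  · exact ⟨Quotient.mk r a⟩

lemma sum_orbits_eq {p q : ℕ} (hp : 1 ≤ p) (hq : 1 ≤ q) (π : Equiv.Perm (Fin (p+q)))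
    (hnc : IsNoncrossingOn π (tauPQ p q))
    (a b : Fin (p+q)) (hab : π.SameCycle a b) (ha : (a : ℕ) < p) (hb : p ≤ (b : ℕ)) :
    numOrbits π + numOrbits (π⁻¹ * tauPQ p q) = p + q := by
  have h2 : numOrbits (tauPQ p q) = 2 := tauPQ_numOrbits hp hq
  have hJ : numJoin π (tauPQ p q) = 1 := numJoin_eq_one π a b hab ha hb
  rw [IsNoncrossingOn, euler, h2, hJ] at hnc
  have hcard : Nat.card (Fin (p+q)) = p + q := by
    rw [Nat.card_eq_fintype_card, Fintype.card_fin]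
  rw [hcard] at hnc
  omega

lemma exists_crossing_left {p q : ℕ} (π : Equiv.Perm (Fin (p+q))) :
    ∀ (k : ℕ) (a : Fin (p+q)), (a : ℕ) < p → p ≤ (((π ^ k) a : Fin (p+q)) : ℕ) →
      ∃ c : Fin (p+q), π.SameCycle a c ∧ (c : ℕ) < p ∧ p ≤ ((π c : Fin (p+q)) : ℕ) := by
  intro k
  induction k with
  | zero =>
    intro a ha hk
    simp only [pow_zero, Equiv.Perm.one_apply] at hk
    omega
  | succ n ih =>
    intro a ha hk
    by_cases hpa : p ≤ ((π a : Fin (p+q)) : ℕ)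
    · exact ⟨a, Equiv.Perm.SameCycle.refl _ _, ha, hpa⟩
    · push_neg at hpa
      have hpow : (π ^ (n+1)) a = (π ^ n) (π a) := by rw [pow_succ, Equiv.Perm.mul_apply]
      rw [hpow] at hk
      obtain ⟨c, hc1, hc2, hc3⟩ := ih (π a) hpa hk
      exact ⟨c, (sameCycle_apply_self π a).trans hc1, hc2, hc3⟩

lemma exists_crossing_right {p q : ℕ} (π : Equiv.Perm (Fin (p+q))) :
    ∀ (k : ℕ) (b : Fin (p+q)), p ≤ (b : ℕ) → (((π ^ k) b : Fin (p+q)) : ℕ) < p →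
      ∃ c : Fin (p+q), π.SameCycle b c ∧ p ≤ (c : ℕ) ∧ ((π c : Fin (p+q)) : ℕ) < p := by
  intro k
  induction k with
  | zero =>
    intro b hb hk
    simp only [pow_zero, Equiv.Perm.one_apply] at hk
    omega
  | succ n ih =>
    intro b hb hk
    by_cases hpb : ((π b : Fin (p+q)) : ℕ) < p
    · exact ⟨b, Equiv.Perm.SameCycle.refl _ _, hb, hpb⟩
    · push_neg at hpb
      have hpow : (π ^ (n+1)) b = (π ^ n) (π b) := by rw [pow_succ, Equiv.Perm.mul_apply]
      rw [hpow] at hk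
      obtain ⟨c, hc1, hc2, hc3⟩ := ih (π b) hpb hk
      exact ⟨c, (sameCycle_apply_self π b).trans hc1, hc2, hc3⟩

lemma crossing_unique {p q : ℕ} (hp : 1 ≤ p) (hq : 1 ≤ q) (π : Equiv.Perm (Fin (p+q)))
    (hsum : numOrbits π + numOrbits (π⁻¹ * tauPQ p q) = p + q)
    {c₁ c₂ : Fin (p+q)} (h : π.SameCycle c₁ c₂)
    (h1 : ((c₁ : ℕ) < p ↔ ((π c₁ : Fin (p+q)) : ℕ) ≥ p))
    (h2 : ((c₂ : ℕ) < p ↔ ((π c₂ : Fin (p+q)) : ℕ) ≥ p))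
    (h12 : ((c₁ : ℕ) < p ↔ (c₂ : ℕ) < p)) : c₁ = c₂ := by
  by_contra hne
  have hps : ∀ x : Fin (p+q),
      decide (((tauPQ p q x) : ℕ) < p) = decide ((x : ℕ) < p) := by
    intro x
    simp only [decide_eq_decide]
    exact tauPQ_side x
  have cross : ∀ z : Fin (p+q), ((z : ℕ) < p ↔ ((π z : Fin (p+q)) : ℕ) ≥ p) →
      ¬ (decide (((π z : Fin (p+q)) : ℕ) < p) = decide ((z : ℕ) < p)) := by
    intro z hz
    simp only [decide_eq_decide]
    intro hiff
    by_cases hcc : (z : ℕ) < p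
    · have hge := hz.mp hcc
      have := hiff.mpr hcc
      omega
    · have h3 : ¬ (((π z : Fin (p+q)) : ℕ) ≥ p) := fun hge => hcc (hz.mpr hge)
      have h4 : ((π z : Fin (p+q)) : ℕ) < p := by omega
      exact hcc (hiff.mp h4)
  refine core (fun z : Fin (p+q) => decide ((z : ℕ) < p)) _ π (tauPQ p q) le_rfl hps ?_
    c₁ c₂ hne h ?_ ?_ ?_
  · rw [Fintype.card_fin, tauPQ_numOrbits hp hq, hsum]
  · simp only [decide_eq_decide]
    exact h12
  · exact cross c₁ h1
  · exact cross c₂ h2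

end Final

end Aux

end AnnNC

open AnnNC in
/-- every bridge of an annular noncrossing permutation consists of a block of
elements of `[p]` followed by a block of elements of `[p+1,p+q]`; equivalently, it contains
exactly one element `a ∈ [p]` with `π(a) ∈ [p+1,p+q]` and exactly one element
`b ∈ [p+1,p+q]` with `π(b) ∈ [p]`. -/
theorem stmt0 (p q : ℕ) (hp : 1 ≤ p) (hq : 1 ≤ q) (π : Equiv.Perm (Fin (p + q)))
    (hπ : π ∈ SAnnNC p q) (x : Fin (p + q)) (hx : x ∈ BridgeSet p q π) :
    (∃! a : Fin (p + q), π.SameCycle x a ∧ (a : ℕ) < p ∧ p ≤ ((π a : ℕ))) ∧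
    (∃! b : Fin (p + q), π.SameCycle x b ∧ p ≤ (b : ℕ) ∧ ((π b : ℕ)) < p) := by
  obtain ⟨hnc, -⟩ := hπ
  obtain ⟨a0, b0, hxa0, hxb0, ha0, hb0⟩ := hx
  have hab : π.SameCycle a0 b0 := hxa0.symm.trans hxb0
  have hsum := sum_orbits_eq hp hq π hnc a0 b0 hab ha0 hb0
  obtain ⟨k, -, hk⟩ := hab.exists_pow_eq'
  obtain ⟨c, hc1, hc2, hc3⟩ := exists_crossing_left π k a0 ha0 (by rw [hk]; exact hb0)
  obtain ⟨k', -, hk'⟩ := hab.symm.exists_pow_eq'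
  obtain ⟨d, hd1, hd2, hd3⟩ := exists_crossing_right π k' b0 hb0 (by rw [hk']; exact ha0)
  constructor
  · refine ⟨c, ⟨hxa0.trans hc1, hc2, hc3⟩, ?_⟩
    rintro y ⟨hy1, hy2, hy3⟩
    exact crossing_unique hp hq π hsum (hy1.symm.trans (hxa0.trans hc1))
      ⟨fun _ => hy3, fun _ => hy2⟩ ⟨fun _ => hc3, fun _ => hc2⟩
      (iff_of_true hy2 hc2)
  · refine ⟨d, ⟨hxb0.trans hd1, hd2, hd3⟩, ?_⟩
    rintro y ⟨hy1, hy2, hy3⟩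
    refine crossing_unique hp hq π hsum (hy1.symm.trans (hxb0.trans hd1)) ?_ ?_ ?_
    · exact iff_of_false (by omega) (by omega)
    · exact iff_of_false (by omega) (by omega)
    · exact iff_of_false (by omega) (by omega)
end

section
/- Let p,q ≥ 1, τ := τ_{p,q}, and let π ∈ S_ann-nc(p,q) be such that every cycle of π is a bridge. Then every cycle of π is of the form (a, τ(a), …, τ^{r−1}(a), b, τ(b), …, τ^{s−1}(b)) for some a ∈ [p], b ∈ [p+1,p+q] and r,s ≥ 1; moreover, if the bridges of π are encountered in a given cyclic order when traversing the cycle (1,…,p) of τ, then they are encountered in the reverse cyclic order when traversing the cycle (p+1,…,p+q). Conversely, every permutation of [p+q] all of whose cycles have this form and which meets the two cycles of τ in mutually reverse cyclic orders belongs to S_ann-nc(p,q). -/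
namespace AnnNC

open Equiv Equiv.Perm Finset

attribute [local instance] Classical.propDecidable

set_option linter.unusedSectionVars false

section General

variable {α : Type*} [Fintype α] [DecidableEq α]

noncomputable instance (σ : Perm α) : Fintype (Quotient (orbitSetoid σ)) := Fintype.ofFinite _

lemma numOrbits_eq_card (σ : Perm α) :
    numOrbits σ = Fintype.card (Quotient (orbitSetoid σ)) := Nat.card_eq_fintype_card

/-- The fiber of a class, as a Finset. -/
noncomputable def fib (σ : Perm α) (c : Quotient (orbitSetoid σ)) : Finset α :=
  univ.filter fun x => Quotient.mk (orbitSetoid σ) x = c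

lemma mem_fib {σ : Perm α} {c} {x : α} : x ∈ fib σ c ↔ Quotient.mk (orbitSetoid σ) x = c := by
  simp [fib]

lemma mk_eq_mk {σ : Perm α} {x y : α} :
    (Quotient.mk (orbitSetoid σ) x = Quotient.mk (orbitSetoid σ) y) ↔ σ.SameCycle x y :=
  Quotient.eq

lemma pow_mem_fib {σ : Perm α} {c} {x : α} (hx : x ∈ fib σ c) (i : ℕ) : (σ ^ i) x ∈ fib σ c := by
  rw [mem_fib] at hx ⊢
  rw [← hx, mk_eq_mk]
  exact ⟨-(i:ℤ), by simp [zpow_neg, ← zpow_natCast]⟩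

lemma apply_mem_fib {σ : Perm α} {c} {x : α} (hx : x ∈ fib σ c) : σ x ∈ fib σ c := by
  simpa using pow_mem_fib hx 1

lemma sameCycle_of_mem_fib {σ : Perm α} {c} {x y : α} (hx : x ∈ fib σ c) (hy : y ∈ fib σ c) :
    σ.SameCycle x y := by
  rw [mem_fib] at hx hy; rw [← mk_eq_mk (σ := σ)]; rw [hx, hy]

lemma mem_fib_self (σ : Perm α) (x : α) : x ∈ fib σ (Quotient.mk _ x) := by simp [mem_fib]

lemma mem_fib_of_sameCycle {σ : Perm α} {x y : α} (h : σ.SameCycle x y) :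
    y ∈ fib σ (Quotient.mk _ x) := by
  rw [mem_fib, mk_eq_mk]; exact h.symm

lemma card_eq_sum_fib (σ : Perm α) (s : Finset α) :
    s.card = ∑ c : Quotient (orbitSetoid σ), (s ∩ fib σ c).card := by
  have := Finset.card_eq_sum_card_fiberwise
    (f := fun x => Quotient.mk (orbitSetoid σ) x) (s := s) (t := univ) (by simp)
  rw [this]
  exact Finset.sum_congr rfl fun c _ => by congr 1; ext x; simp [mem_fib, and_comm]

/-- Fiber of a fixed point is a singleton. -/
lemma fib_of_fixed {σ : Perm α} {x : α} (hx : σ x = x) :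
    fib σ (Quotient.mk _ x) = {x} := by
  ext y
  simp only [mem_fib, Finset.mem_singleton]
  constructor
  · intro h
    obtain ⟨i, -, hi⟩ := (mk_eq_mk.mp h).symm.exists_pow_eq'
    rw [← hi, Equiv.Perm.pow_apply_eq_self_of_apply_eq_self hx]
  · rintro rfl; rfl

/-- Fiber of a 2-cycle point. -/
lemma fib_of_two {σ : Perm α} {x : α} (hx : σ x ≠ x) (h2 : σ (σ x) = x) :
    fib σ (Quotient.mk _ x) = {x, σ x} := by
  ext y
  simp only [mem_fib, Finset.mem_insert, Finset.mem_singleton]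
  constructor
  · intro h
    obtain ⟨i, -, hi⟩ := (mk_eq_mk.mp h).symm.exists_pow_eq'
    have key : ∀ j : ℕ, (σ ^ j) x = x ∨ (σ ^ j) x = σ x := by
      intro j
      induction j with
      | zero => simp
      | succ j ih =>
        rcases ih with h' | h'
        · rw [pow_succ', Equiv.Perm.mul_apply, h']; exact Or.inr rfl
        · rw [pow_succ', Equiv.Perm.mul_apply, h']; exact Or.inl h2
    rw [← hi]
    exact key i
  · rintro (rfl | rfl)
    · rfl
    · exact (mk_eq_mk.mpr ⟨1, rfl⟩).symm

lemma two_le_fib_add (σ : Perm α) (c : Quotient (orbitSetoid σ)) :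
    2 ≤ (fib σ c).card + ((univ.filter fun x => σ x = x) ∩ fib σ c).card := by
  induction c using Quotient.ind with
  | _ x =>
    by_cases hx : σ x = x
    · have h1 : x ∈ (univ.filter fun x => σ x = x) ∩ fib σ (Quotient.mk _ x) := by
        simp [mem_fib, hx]
      have := Finset.card_pos.mpr ⟨x, h1⟩
      have := Finset.card_pos.mpr ⟨x, mem_fib_self σ x⟩
      omega
    · have : ({x, σ x} : Finset α) ⊆ fib σ (Quotient.mk _ x) := by
        intro y hy
        simp only [Finset.mem_insert, Finset.mem_singleton] at hy
        rcases hy with rfl | rfl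
        · exact mem_fib_self σ _
        · exact apply_mem_fib (mem_fib_self σ _)
      have h2 := Finset.card_le_card this
      rw [Finset.card_pair (Ne.symm hx)] at h2
      omega

/-- The master inequality: 2·#orbits ≤ n + #fixed points. -/
lemma two_mul_orbits_le (σ : Perm α) (F : Finset α) (hF : ∀ x, x ∈ F ↔ σ x = x) :
    2 * Fintype.card (Quotient (orbitSetoid σ))
      ≤ Fintype.card α + F.card := by
  have hFeq : F = univ.filter fun x => σ x = x := by ext x; simp [hF]
  rw [hFeq]
  have h1 : Fintype.card α = ∑ c : Quotient (orbitSetoid σ), (fib σ c).card := by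
    simpa [Finset.univ_inter] using card_eq_sum_fib σ univ
  have h2 := card_eq_sum_fib σ (univ.filter fun x => σ x = x)
  rw [h1, h2, ← Finset.sum_add_distrib]
  calc 2 * Fintype.card (Quotient (orbitSetoid σ))
      = ∑ _c : Quotient (orbitSetoid σ), 2 := by simp [mul_comm]
    _ ≤ _ := Finset.sum_le_sum fun c _ => two_le_fib_add σ c

/-- Equality case, forward: equality implies near-involution. -/
lemma invol_of_eq (σ : Perm α) (F : Finset α) (hF : ∀ x, x ∈ F ↔ σ x = x)
    (h : 2 * Fintype.card (Quotient (orbitSetoid σ))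
      = Fintype.card α + F.card) :
    ∀ x : α, σ x ≠ x → σ (σ x) = x := by
  intro x hx
  have hFeq : F = univ.filter fun x => σ x = x := by ext y; simp [hF]
  rw [hFeq] at h
  have h1 : Fintype.card α = ∑ c : Quotient (orbitSetoid σ), (fib σ c).card := by
    simpa [Finset.univ_inter] using card_eq_sum_fib σ univ
  have h2 := card_eq_sum_fib σ (univ.filter fun x => σ x = x)
  have hsum : ∑ _c : Quotient (orbitSetoid σ), 2
      = ∑ c : Quotient (orbitSetoid σ),
        ((fib σ c).card + ((univ.filter fun x => σ x = x) ∩ fib σ c).card) := by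
    rw [Finset.sum_add_distrib, ← h1, ← h2, ← h]
    simp [mul_comm]
  have hper := (Finset.sum_eq_sum_iff_of_le (fun c _ => two_le_fib_add σ c)).mp hsum
  have hc := hper (Quotient.mk _ x) (Finset.mem_univ _)
  have hfix : (univ.filter fun y => σ y = y) ∩ fib σ (Quotient.mk _ x) = ∅ := by
    rw [Finset.eq_empty_iff_forall_notMem]
    intro y hy
    simp only [Finset.mem_inter, Finset.mem_filter] at hy
    have := sameCycle_of_mem_fib hy.2 (mem_fib_self σ x)
    obtain ⟨i, -, hi⟩ := this.exists_pow_eq'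
    rw [Equiv.Perm.pow_apply_eq_self_of_apply_eq_self hy.1.2] at hi
    exact hx (hi ▸ hy.1.2)
  rw [hfix] at hc
  simp only [Finset.card_empty, add_zero] at hc
  have hsub : ({x, σ x} : Finset α) ⊆ fib σ (Quotient.mk _ x) := by
    intro y hy
    simp only [Finset.mem_insert, Finset.mem_singleton] at hy
    rcases hy with rfl | rfl
    · exact mem_fib_self σ _
    · exact apply_mem_fib (mem_fib_self σ _)
  have heq : fib σ (Quotient.mk _ x) = {x, σ x} := by
    symm
    apply Finset.eq_of_subset_of_card_le hsub
    rw [Finset.card_pair (Ne.symm hx)]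
    omega
  have hmem : σ (σ x) ∈ fib σ (Quotient.mk _ x) :=
    apply_mem_fib (apply_mem_fib (mem_fib_self σ x))
  rw [heq] at hmem
  simp only [Finset.mem_insert, Finset.mem_singleton] at hmem
  rcases hmem with h' | h'
  · exact h'
  · exact absurd (σ.injective h') hx

/-- Equality case, backward. -/
lemma eq_of_invol (σ : Perm α) (F : Finset α) (hF : ∀ x, x ∈ F ↔ σ x = x)
    (h : ∀ x : α, σ x ≠ x → σ (σ x) = x) :
    2 * Fintype.card (Quotient (orbitSetoid σ))
      = Fintype.card α + F.card := by
  have hFeq : F = univ.filter fun x => σ x = x := by ext y; simp [hF]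
  rw [hFeq]
  have h1 : Fintype.card α = ∑ c : Quotient (orbitSetoid σ), (fib σ c).card := by
    simpa [Finset.univ_inter] using card_eq_sum_fib σ univ
  have h2 := card_eq_sum_fib σ (univ.filter fun x => σ x = x)
  rw [h1, h2, ← Finset.sum_add_distrib]
  have key : ∀ c : Quotient (orbitSetoid σ),
      (fib σ c).card + ((univ.filter fun x => σ x = x) ∩ fib σ c).card = 2 := by
    intro c
    induction c using Quotient.ind with
    | _ x =>
      by_cases hx : σ x = x
      · rw [fib_of_fixed hx]
        rw [Finset.inter_comm, Finset.singleton_inter_of_mem (by simp [hx])]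
        simp
      · rw [fib_of_two hx (h x hx)]
        have : (univ.filter fun y => σ y = y) ∩ {x, σ x} = ∅ := by
          rw [Finset.eq_empty_iff_forall_notMem]
          intro y hy
          simp only [Finset.mem_inter, Finset.mem_filter, Finset.mem_insert,
            Finset.mem_singleton] at hy
          rcases hy.2 with rfl | rfl
          · exact hx hy.1.2
          · exact hx (σ.injective hy.1.2)
        rw [this, Finset.card_pair (Ne.symm hx)]
        simp
  rw [Finset.sum_congr rfl fun c _ => key c]
  simp [mul_comm]

/-- the per-class count of forward transitions equals that of backward transitions. -/
lemma cnt_eq (σ : Perm α) (ℓ : α → Prop) (c : Quotient (orbitSetoid σ)) (s t : Finset α)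
    (hs : ∀ x, x ∈ s ↔ x ∈ fib σ c ∧ ℓ x ∧ ¬ ℓ (σ x))
    (ht : ∀ x, x ∈ t ↔ x ∈ fib σ c ∧ ¬ ℓ x ∧ ℓ (σ x)) :
    s.card = t.card := by
  have hseq : s = (fib σ c).filter fun x => ℓ x ∧ ¬ ℓ (σ x) := by ext x; simp only [hs, Finset.mem_filter]
  have hteq : t = (fib σ c).filter fun x => ¬ ℓ x ∧ ℓ (σ x) := by ext x; simp only [ht, Finset.mem_filter]
  rw [hseq, hteq]
  have key : ((fib σ c).filter fun x => ℓ (σ x)).card = ((fib σ c).filter fun x => ℓ x).card := by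
    refine Finset.card_bij (fun x _ => σ x) ?_ ?_ ?_
    · intro a ha; simp only [mem_filter] at ha ⊢
      exact ⟨apply_mem_fib ha.1, ha.2⟩
    · intro a _ b _ h; exact σ.injective h
    · intro b hb; simp only [mem_filter] at hb
      have hmem : σ⁻¹ b ∈ fib σ c := by
        rw [mem_fib] at hb ⊢
        rw [← hb.1, mk_eq_mk]
        exact ⟨1, by simp⟩
      exact ⟨σ⁻¹ b, by simp only [mem_filter]; exact ⟨hmem, by simpa using hb.2⟩, by simp⟩
  have h1 : ((fib σ c).filter fun x => ℓ x).card
      = ((fib σ c).filter fun x => ℓ x ∧ ℓ (σ x)).card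
        + ((fib σ c).filter fun x => ℓ x ∧ ¬ ℓ (σ x)).card := by
    rw [← Finset.filter_filter, ← Finset.filter_filter,
      Finset.card_filter_add_card_filter_not]
  have h2 : ((fib σ c).filter fun x => ℓ (σ x)).card
      = ((fib σ c).filter fun x => ℓ x ∧ ℓ (σ x)).card
        + ((fib σ c).filter fun x => ¬ ℓ x ∧ ℓ (σ x)).card := by
    have e1 : ((fib σ c).filter fun x => ℓ x ∧ ℓ (σ x))
        = ((fib σ c).filter fun x => ℓ (σ x)).filter (fun x => ℓ x) := by
      rw [Finset.filter_filter]; apply Finset.filter_congr; intro x _; tauto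
    have e2 : ((fib σ c).filter fun x => ¬ ℓ x ∧ ℓ (σ x))
        = ((fib σ c).filter fun x => ℓ (σ x)).filter (fun x => ¬ ℓ x) := by
      rw [Finset.filter_filter]; apply Finset.filter_congr; intro x _; tauto
    rw [e1, e2, Finset.card_filter_add_card_filter_not]
  omega

/-- existence of a forward transition in a class containing both kinds of points. -/
lemma exists_transition (σ : Perm α) (ℓ : α → Prop) (c : Quotient (orbitSetoid σ))
    {a b : α} (ha : a ∈ fib σ c) (hb : b ∈ fib σ c) (hla : ℓ a) (hlb : ¬ ℓ b) :
    ∃ u ∈ fib σ c, ℓ u ∧ ¬ ℓ (σ u) := by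
  by_contra hcon
  push_neg at hcon
  have key : ∀ i : ℕ, ℓ ((σ ^ i) a) := by
    intro i
    induction i with
    | zero => simpa using hla
    | succ i ih =>
      have hmem : (σ ^ i) a ∈ fib σ c := pow_mem_fib ha i
      have := hcon _ hmem ih
      rw [pow_succ']
      simpa using this
  obtain ⟨i, -, hi⟩ := (sameCycle_of_mem_fib ha hb).exists_pow_eq'
  exact hlb (hi ▸ key i)

lemma card_eq_one_of_exUnique {s : Finset α} (h : ∃! a, a ∈ s) : s.card = 1 := by
  obtain ⟨a, ha, hu⟩ := h
  rw [Finset.card_eq_one]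
  refine ⟨a, ?_⟩
  ext y
  simp only [Finset.mem_singleton]
  exact ⟨fun hy => hu y hy, fun hy => hy ▸ ha⟩

end General

section Tau

lemma tau_apply_left (p q : ℕ) (i : Fin p) :
    tauPQ p q (finSumFinEquiv (Sum.inl i)) = finSumFinEquiv (Sum.inl (finRotate p i)) := by
  simp [tauPQ, Equiv.permCongr_apply]

lemma tau_apply_right (p q : ℕ) (j : Fin q) :
    tauPQ p q (finSumFinEquiv (Sum.inr j)) = finSumFinEquiv (Sum.inr (finRotate q j)) := by
  simp [tauPQ, Equiv.permCongr_apply]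

lemma repr_left (p q : ℕ) (x : Fin (p + q)) (h : (x : ℕ) < p) :
    x = finSumFinEquiv (Sum.inl (⟨x, h⟩ : Fin p)) := by
  apply Fin.ext; simp

lemma repr_right (p q : ℕ) (x : Fin (p + q)) (h : p ≤ (x : ℕ)) :
    x = finSumFinEquiv (Sum.inr (⟨(x : ℕ) - p, by omega⟩ : Fin q)) := by
  apply Fin.ext; simp; omega

lemma coe_left (p q : ℕ) (i : Fin p) : ((finSumFinEquiv (Sum.inl i) : Fin (p+q)) : ℕ) < p := by
  simp

lemma coe_right (p q : ℕ) (j : Fin q) : p ≤ ((finSumFinEquiv (Sum.inr j) : Fin (p+q)) : ℕ) := by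
  simp

/-- τ preserves the two sides. -/
lemma tau_side (p q : ℕ) (x : Fin (p + q)) : ((tauPQ p q x : ℕ) < p ↔ (x : ℕ) < p) := by
  by_cases h : (x : ℕ) < p
  · rw [repr_left p q x h, tau_apply_left]
    exact iff_of_true (coe_left p q _) (coe_left p q _)
  · rw [repr_right p q x (by omega), tau_apply_right]
    exact iff_of_false (not_lt.mpr (coe_right p q _)) (not_lt.mpr (coe_right p q _))

lemma tau_pow_left (p q : ℕ) (k : ℕ) (i : Fin p) :
    ((tauPQ p q) ^ k) (finSumFinEquiv (Sum.inl i))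
      = finSumFinEquiv (Sum.inl (((finRotate p) ^ k) i)) := by
  induction k with
  | zero => simp
  | succ k ih =>
    rw [pow_succ', Equiv.Perm.mul_apply, ih, tau_apply_left, pow_succ' (finRotate p),
      Equiv.Perm.mul_apply]

lemma tau_pow_right (p q : ℕ) (k : ℕ) (j : Fin q) :
    ((tauPQ p q) ^ k) (finSumFinEquiv (Sum.inr j))
      = finSumFinEquiv (Sum.inr (((finRotate q) ^ k) j)) := by
  induction k with
  | zero => simp
  | succ k ih =>
    rw [pow_succ', Equiv.Perm.mul_apply, ih, tau_apply_right, pow_succ' (finRotate q),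
      Equiv.Perm.mul_apply]

open Fin.NatCast in
lemma finRotate_pow (m : ℕ) (k : ℕ) (i : Fin (m + 1)) :
    ((finRotate (m + 1)) ^ k) i = i + (k : Fin (m + 1)) := by
  induction k with
  | zero => simp
  | succ k ih =>
    rw [pow_succ', Equiv.Perm.mul_apply, ih, finRotate_succ_apply]
    push_cast
    rw [add_assoc]

open Fin.NatCast in
lemma finRotate_trans {m : ℕ} (hm : 1 ≤ m) (i j : Fin m) :
    ∃ k : ℕ, ((finRotate m) ^ k) i = j := by
  obtain ⟨m, rfl⟩ : ∃ m', m = m' + 1 := ⟨m - 1, by omega⟩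
  exact ⟨(j - i).val, by rw [finRotate_pow, Fin.cast_val_eq_self, add_sub_cancel]⟩

/-- same side implies same cycle of τ. -/
lemma tau_sameCycle (p q : ℕ) (x y : Fin (p + q)) (h : ((x : ℕ) < p ↔ (y : ℕ) < p)) :
    (tauPQ p q).SameCycle x y := by
  by_cases hx : (x : ℕ) < p
  · have hy := h.mp hx
    obtain ⟨k, hk⟩ := finRotate_trans (by omega : 1 ≤ p) (⟨x, hx⟩ : Fin p) ⟨y, hy⟩
    refine ⟨(k : ℤ), ?_⟩
    rw [zpow_natCast, repr_left p q x hx, tau_pow_left, hk, ← repr_left p q y hy]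
  · have hy : ¬ (y : ℕ) < p := fun hy => hx (h.mpr hy)
    have hq : 1 ≤ q := by have := x.isLt; omega
    obtain ⟨k, hk⟩ := finRotate_trans hq (⟨(x:ℕ) - p, by have := x.isLt; omega⟩ : Fin q)
      ⟨(y:ℕ) - p, by have := y.isLt; omega⟩
    refine ⟨(k : ℤ), ?_⟩
    rw [zpow_natCast, repr_right p q x (by omega), tau_pow_right, hk, ← repr_right p q y (by omega)]

/-- same cycle of τ implies same side. -/
lemma tau_sameCycle_side (p q : ℕ) (x y : Fin (p + q)) (h : (tauPQ p q).SameCycle x y) :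
    ((x : ℕ) < p ↔ (y : ℕ) < p) := by
  obtain ⟨i, -, hi⟩ := h.exists_pow_eq'
  have key : ∀ j : ℕ, ((((tauPQ p q) ^ j) x : ℕ) < p ↔ (x : ℕ) < p) := by
    intro j
    induction j with
    | zero => simp
    | succ j ih => rw [pow_succ', Equiv.Perm.mul_apply, tau_side]; exact ih
  rw [← hi]
  exact (key i).symm

/-- τ has exactly two orbits. -/
lemma numOrbits_tau (p q : ℕ) (hp : 1 ≤ p) (hq : 1 ≤ q) : numOrbits (tauPQ p q) = 2 := by
  rw [numOrbits, Nat.card_eq_two_iff]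
  have hx0 : (0 : ℕ) < p := hp
  refine ⟨Quotient.mk _ (⟨0, by omega⟩ : Fin (p + q)), Quotient.mk _ (⟨p, by omega⟩ : Fin (p + q)),
    ?_, ?_⟩
  · intro h
    have := tau_sameCycle_side p q _ _ (mk_eq_mk.mp h)
    simp at this
    omega
  · rw [Set.eq_univ_iff_forall]
    intro c
    induction c using Quotient.ind with
    | _ z =>
      simp only [Set.mem_insert_iff, Set.mem_singleton_iff]
      by_cases hz : (z : ℕ) < p
      · left
        rw [mk_eq_mk]
        refine tau_sameCycle p q z _ ?_
        simp only [Fin.val_mk]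
        exact iff_of_true hz hp
      · right
        rw [mk_eq_mk]
        refine tau_sameCycle p q z _ ?_
        simp only [not_lt] at hz
        simp
        omega

end Tau

section Reduce

lemma numJoin_eq_one_s1 (p q : ℕ) (hp : 1 ≤ p) (π : Equiv.Perm (Fin (p+q)))
    (hall : ∀ x, x ∈ BridgeSet p q π) : numJoin π (tauPQ p q) = 1 := by
  rw [numJoin, Nat.card_eq_one_iff_unique]
  constructor
  · constructor
    intro c d
    induction c using Quotient.ind with
    | _ x =>
    induction d using Quotient.ind with
    | _ y =>
    apply Quotient.sound
    have hπ : ∀ {u v : Fin (p+q)}, π.SameCycle u v →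
        (orbitSetoid π ⊔ orbitSetoid (tauPQ p q)) u v :=
      fun h => Setoid.le_def.mp le_sup_left h
    have hτ : ∀ {u v : Fin (p+q)}, (tauPQ p q).SameCycle u v →
        (orbitSetoid π ⊔ orbitSetoid (tauPQ p q)) u v :=
      fun h => Setoid.le_def.mp le_sup_right h
    obtain ⟨a, b, hxa, hxb, ha, hb⟩ := hall x
    obtain ⟨a', b', hya', hyb', ha', hb'⟩ := hall y
    exact Setoid.trans' _ (hπ hxa) (Setoid.trans' _
      (hτ (tau_sameCycle p q a a' (iff_of_true ha ha'))) (Setoid.symm' _ (hπ hya')))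
  · exact ⟨Quotient.mk _ ⟨0, by omega⟩⟩

lemma mem_iff_sum (p q : ℕ) (hp : 1 ≤ p) (hq : 1 ≤ q) (π : Equiv.Perm (Fin (p+q)))
    (hall : ∀ x, x ∈ BridgeSet p q π) :
    π ∈ SAnnNC p q ↔ numOrbits π + numOrbits (π⁻¹ * tauPQ p q) = p + q := by
  have hbridge : ∃ a b : Fin (p+q), π.SameCycle a b ∧ (a:ℕ) < p ∧ p ≤ (b:ℕ) := by
    obtain ⟨a, b, hxa, hxb, ha, hb⟩ := hall ⟨0, by omega⟩
    exact ⟨a, b, hxa.symm.trans hxb, ha, hb⟩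
  have hcard : Nat.card (Fin (p+q)) = p + q := by simp
  constructor
  · rintro ⟨hnc, -⟩
    rw [IsNoncrossingOn, euler, numOrbits_tau p q hp hq, numJoin_eq_one_s1 p q hp π hall,
      hcard] at hnc
    omega
  · intro h
    refine ⟨?_, hbridge⟩
    rw [IsNoncrossingOn, euler, numOrbits_tau p q hp hq, numJoin_eq_one_s1 p q hp π hall, hcard]
    omega

end Reduce

end AnnNC


open AnnNC in
/-- if every cycle of `π` is a bridge, then `π ∈ S_ann-nc(p,q)` iff
every cycle is of the form `(a, τ(a), …, τ^{r−1}(a), b, τ(b), …, τ^{s−1}(b))`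
(i.e. steps staying on one side of the annulus are `τ`-steps and each cycle has exactly one
transition from `[p]` to `[p+1,p+q]`), and the bridges are encountered in mutually reverse
cyclic orders along the two cycles of `τ` (i.e. the next bridge along the first circle is
the previous bridge along the second circle). -/
theorem stmt1 (p q : ℕ) (hp : 1 ≤ p) (hq : 1 ≤ q) (π : Equiv.Perm (Fin (p + q)))
    (hall : ∀ x : Fin (p + q), x ∈ BridgeSet p q π) :
    π ∈ SAnnNC p q ↔
      ((∀ c : Fin (p + q), (((c : ℕ) < p) ↔ ((π c : ℕ) < p)) → π c = tauPQ p q c) ∧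
       (∀ x : Fin (p + q), ∃! u : Fin (p + q),
          π.SameCycle x u ∧ (u : ℕ) < p ∧ p ≤ ((π u : ℕ))) ∧
       (∀ u : Fin (p + q), (u : ℕ) < p → p ≤ ((π u : ℕ)) →
          π.SameCycle (tauPQ p q u) ((tauPQ p q)⁻¹ (π u)))) := by
  classical
  rw [AnnNC.mem_iff_sum p q hp hq π hall]
  set τ := tauPQ p q with hτdef
  set σ := π⁻¹ * τ with hσdef
  have hσ_apply : ∀ x, σ x = π⁻¹ (τ x) := fun x => rfl
  have hσinv_apply : ∀ x, σ⁻¹ x = τ⁻¹ (π x) := by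
    intro x; rw [hσdef]; simp
  have hσ_fix : ∀ x : Fin (p+q), σ x = x ↔ π x = τ x := by
    intro x
    rw [hσ_apply]
    constructor
    · intro h; conv_lhs => rw [← h]
      simp
    · intro h; rw [← h]; simp
  have hside_ne : ∀ x : Fin (p+q), ¬(((x:ℕ) < p) ↔ ((π x : ℕ) < p)) → π x ≠ τ x := by
    intro x h heq
    exact h (by rw [heq]; exact (tau_side p q x).symm)
  set D := Finset.univ.filter (fun x : Fin (p+q) => π x ≠ τ x) with hDdef
  set Sfix := Finset.univ.filter (fun x : Fin (p+q) => σ x = x) with hSdef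
  have hmemD : ∀ x, x ∈ D ↔ π x ≠ τ x := by intro x; rw [hDdef]; simp
  have hmemF : ∀ x, x ∈ Sfix ↔ σ x = x := by intro x; rw [hSdef]; simp
  -- per-class existence of both transitions
  have huw : ∀ c : Quotient (orbitSetoid π),
      (∃ u ∈ fib π c, (u:ℕ) < p ∧ ¬((π u : ℕ) < p)) ∧
      (∃ w ∈ fib π c, ¬((w:ℕ) < p) ∧ ((π w : ℕ) < p)) := by
    intro c
    induction c using Quotient.ind with
    | _ x =>
      obtain ⟨a, b, hxa, hxb, ha, hb⟩ := hall x
      have haf : a ∈ fib π (Quotient.mk _ x) := mem_fib_of_sameCycle hxa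
      have hbf : b ∈ fib π (Quotient.mk _ x) := mem_fib_of_sameCycle hxb
      constructor
      · exact exists_transition π (fun y => (y:ℕ) < p) _ haf hbf ha (by omega)
      · obtain ⟨w, hwf, hw1, hw2⟩ :=
          exists_transition π (fun y => ¬ (y:ℕ) < p) _ hbf haf (by omega) (by simp [ha])
        exact ⟨w, hwf, hw1, by simpa using hw2⟩
  -- bookkeeping on fixed points of σ
  have hDfix : Sfix.card + D.card = p + q := by
    have h := Finset.card_filter_add_card_filter_not
      (s := (Finset.univ : Finset (Fin (p+q)))) (p := fun x => π x = τ x)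
    have e1 : Finset.univ.filter (fun x : Fin (p+q) => π x = τ x) = Sfix := by
      ext x; simp [hmemF, hσ_fix]
    have e2 : Finset.univ.filter (fun x : Fin (p+q) => ¬ π x = τ x) = D := by
      ext x; simp [hmemD]
    rw [e1, e2] at h
    simpa using h
  have hDsum : D.card = ∑ c : Quotient (orbitSetoid π), (D ∩ fib π c).card :=
    card_eq_sum_fib π D
  have htwo : ∀ c : Quotient (orbitSetoid π), 2 ≤ (D ∩ fib π c).card := by
    intro c
    obtain ⟨⟨u, huf, hu1, hu2⟩, ⟨w, hwf, hw1, hw2⟩⟩ := huw c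
    have hune : π u ≠ τ u := hside_ne u (by tauto)
    have hwne : π w ≠ τ w := hside_ne w (by tauto)
    have huwne : u ≠ w := fun h => hw1 (h ▸ hu1)
    have hsub : ({u, w} : Finset (Fin (p+q))) ⊆ D ∩ fib π c := by
      intro y hy
      simp only [Finset.mem_insert, Finset.mem_singleton] at hy
      rcases hy with rfl | rfl
      · exact Finset.mem_inter.mpr ⟨(hmemD y).mpr hune, huf⟩
      · exact Finset.mem_inter.mpr ⟨(hmemD y).mpr hwne, hwf⟩
    have := Finset.card_le_card hsub
    rwa [Finset.card_pair huwne] at this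
  have hineq1 : 2 * numOrbits π ≤ D.card := by
    rw [numOrbits_eq_card, hDsum]
    calc 2 * Fintype.card (Quotient (orbitSetoid π))
        = ∑ _c : Quotient (orbitSetoid π), 2 := by simp [mul_comm]
      _ ≤ _ := Finset.sum_le_sum fun c _ => htwo c
  have hineq2 := two_mul_orbits_le σ Sfix hmemF
  rw [← numOrbits_eq_card, Fintype.card_fin] at hineq2
  constructor
  · -- noncrossing ⇒ A ∧ B ∧ C
    intro hsum
    have heq1 : D.card = 2 * numOrbits π := by omega
    have heq2 : 2 * numOrbits σ = (p + q) + Sfix.card := by omega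
    have hper : ∀ c : Quotient (orbitSetoid π), (D ∩ fib π c).card = 2 := by
      have hsum2 : ∑ _c : Quotient (orbitSetoid π), 2
          = ∑ c : Quotient (orbitSetoid π), (D ∩ fib π c).card := by
        rw [← hDsum, heq1, numOrbits_eq_card]
        simp [mul_comm]
      have := (Finset.sum_eq_sum_iff_of_le (fun c _ => htwo c)).mp hsum2
      exact fun c => (this c (Finset.mem_univ c)).symm
    have hinvol : ∀ x : Fin (p+q), σ x ≠ x → σ (σ x) = x := by
      apply invol_of_eq σ Sfix hmemF
      rw [← numOrbits_eq_card, Fintype.card_fin]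
      exact heq2
    have hA : ∀ c : Fin (p + q), (((c : ℕ) < p) ↔ ((π c : ℕ) < p)) → π c = τ c := by
      intro c hcside
      by_contra hne
      obtain ⟨⟨u, huf, hu1, hu2⟩, ⟨w, hwf, hw1, hw2⟩⟩ := huw (Quotient.mk _ c)
      have hune : π u ≠ τ u := hside_ne u (by tauto)
      have hwne : π w ≠ τ w := hside_ne w (by tauto)
      have huc : u ≠ c := fun h => hu2 (h ▸ (hcside.mp (h ▸ hu1)))
      have hwc : w ≠ c := by
        intro h
        subst h
        by_cases hcl : (w : ℕ) < p
        · exact hw1 hcl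
        · exact hcl (hcside.mpr hw2)
      have huwne : u ≠ w := fun h => hw1 (h ▸ hu1)
      have hsub : ({u, w, c} : Finset (Fin (p+q))) ⊆ D ∩ fib π (Quotient.mk _ c) := by
        intro y hy
        simp only [Finset.mem_insert, Finset.mem_singleton] at hy
        rcases hy with rfl | rfl | rfl
        · exact Finset.mem_inter.mpr ⟨(hmemD y).mpr hune, huf⟩
        · exact Finset.mem_inter.mpr ⟨(hmemD y).mpr hwne, hwf⟩
        · exact Finset.mem_inter.mpr ⟨(hmemD y).mpr hne, mem_fib_self π _⟩
      have hcards := Finset.card_le_card hsub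
      rw [hper (Quotient.mk _ c)] at hcards
      rw [Finset.card_insert_of_notMem (by simp [huwne, huc]),
        Finset.card_insert_of_notMem (by simp [hwc]), Finset.card_singleton] at hcards
      omega
    refine ⟨hA, ?_, ?_⟩
    · -- B
      intro x
      obtain ⟨⟨u, huf, hu1, hu2⟩, ⟨w, hwf, hw1, hw2⟩⟩ := huw (Quotient.mk _ x)
      have hune : π u ≠ τ u := hside_ne u (by tauto)
      have hwne : π w ≠ τ w := hside_ne w (by tauto)
      have huwne : u ≠ w := fun h => hw1 (h ▸ hu1)
      refine ⟨u, ⟨sameCycle_of_mem_fib (mem_fib_self π x) huf, hu1, by omega⟩, ?_⟩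
      intro y ⟨hxy, hy1, hy2⟩
      by_contra hyu
      have hyf : y ∈ fib π (Quotient.mk _ x) := mem_fib_of_sameCycle hxy
      have hyne : π y ≠ τ y := hside_ne y (by omega)
      have hyw : y ≠ w := fun h => hw1 (h ▸ hy1)
      have hsub : ({y, u, w} : Finset (Fin (p+q))) ⊆ D ∩ fib π (Quotient.mk _ x) := by
        intro z hz
        simp only [Finset.mem_insert, Finset.mem_singleton] at hz
        rcases hz with rfl | rfl | rfl
        · exact Finset.mem_inter.mpr ⟨(hmemD z).mpr hyne, hyf⟩
        · exact Finset.mem_inter.mpr ⟨(hmemD z).mpr hune, huf⟩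
        · exact Finset.mem_inter.mpr ⟨(hmemD z).mpr hwne, hwf⟩
      have hcards := Finset.card_le_card hsub
      rw [hper (Quotient.mk _ x)] at hcards
      rw [Finset.card_insert_of_notMem (by simp [hyu, hyw]),
        Finset.card_insert_of_notMem (by simp [huwne]), Finset.card_singleton] at hcards
      omega
    · -- C
      intro u hu1 hu2
      have hune : σ u ≠ u := fun h => hside_ne u (by omega) ((hσ_fix u).mp h)
      have h2 := hinvol u hune
      have h3 : σ u = σ⁻¹ u := by
        conv_rhs => rw [← h2]
        simp
      rw [hσ_apply, hσinv_apply] at h3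
      show π.SameCycle (τ u) (τ⁻¹ (π u))
      rw [← h3]
      exact ⟨-1, by simp⟩
  · -- A ∧ B ∧ C ⇒ noncrossing
    rintro ⟨hA, hB, hC⟩
    have hLR1 : ∀ x : Fin (p+q),
        ((fib π (Quotient.mk _ x)).filter fun y : Fin (p+q) => (y:ℕ) < p ∧ ¬((π y : ℕ) < p)).card = 1 := by
      intro x
      obtain ⟨u, ⟨hxu, hu1, hu2⟩, huniq⟩ := hB x
      apply card_eq_one_of_exUnique
      refine ⟨u, ?_, ?_⟩
      · exact Finset.mem_filter.mpr ⟨mem_fib_of_sameCycle hxu, hu1, by omega⟩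
      · intro y hy
        rw [Finset.mem_filter] at hy
        exact huniq y ⟨sameCycle_of_mem_fib (mem_fib_self π x) hy.1, hy.2.1, by omega⟩
    have hRL1 : ∀ x : Fin (p+q),
        ((fib π (Quotient.mk _ x)).filter fun y : Fin (p+q) => ¬((y:ℕ) < p) ∧ ((π y : ℕ) < p)).card = 1 := by
      intro x
      rw [← hLR1 x]
      exact (cnt_eq π (fun y => (y:ℕ) < p) (Quotient.mk _ x) _ _
        (fun y => Finset.mem_filter) (fun y => Finset.mem_filter)).symm
    have hLRuniq : ∀ u v : Fin (p+q), π.SameCycle u v →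
        ((u:ℕ) < p ∧ ¬((π u : ℕ) < p)) → ((v:ℕ) < p ∧ ¬((π v : ℕ) < p)) → u = v := by
      intro u v hsc h1 h2
      obtain ⟨a, ha⟩ := Finset.card_eq_one.mp (hLR1 u)
      have m1 : u ∈ ({a} : Finset (Fin (p+q))) := by
        rw [← ha]; exact Finset.mem_filter.mpr ⟨mem_fib_self π u, h1⟩
      have m2 : v ∈ ({a} : Finset (Fin (p+q))) := by
        rw [← ha]; exact Finset.mem_filter.mpr ⟨mem_fib_of_sameCycle hsc, h2⟩
      rw [Finset.mem_singleton] at m1 m2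
      rw [m1, m2]
    have hRLuniq : ∀ u v : Fin (p+q), π.SameCycle u v →
        (¬((u:ℕ) < p) ∧ ((π u : ℕ) < p)) → (¬((v:ℕ) < p) ∧ ((π v : ℕ) < p)) → u = v := by
      intro u v hsc h1 h2
      obtain ⟨a, ha⟩ := Finset.card_eq_one.mp (hRL1 u)
      have m1 : u ∈ ({a} : Finset (Fin (p+q))) := by
        rw [← ha]; exact Finset.mem_filter.mpr ⟨mem_fib_self π u, h1⟩
      have m2 : v ∈ ({a} : Finset (Fin (p+q))) := by
        rw [← ha]; exact Finset.mem_filter.mpr ⟨mem_fib_of_sameCycle hsc, h2⟩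
      rw [Finset.mem_singleton] at m1 m2
      rw [m1, m2]
    -- the key pointwise identity at forward transitions
    have hSub1 : ∀ u : Fin (p+q), (u:ℕ) < p → ¬((π u : ℕ) < p) →
        π⁻¹ (τ u) = τ⁻¹ (π u) := by
      intro u hu1 hu2
      have hπw' : π (π⁻¹ (τ u)) = τ u := by simp
      have hτu : ((τ u : ℕ) < p) := (tau_side p q u).mpr hu1
      have hw'R : ¬ ((π⁻¹ (τ u) : ℕ) < p) := by
        intro hL
        have heq := hA (π⁻¹ (τ u)) (iff_of_true hL (by rw [hπw']; exact hτu))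
        have hττ : τ (π⁻¹ (τ u)) = τ u := by rw [← heq, hπw']
        have hwu : π⁻¹ (τ u) = u := τ.injective hττ
        rw [hwu] at hπw'
        exact hu2 (by rw [hπw']; exact hτu)
      have hw'L : ((π (π⁻¹ (τ u)) : ℕ) < p) := by rw [hπw']; exact hτu
      have hτv : τ (τ⁻¹ (π u)) = π u := by simp
      have hvR : ¬ ((τ⁻¹ (π u) : ℕ) < p) := by
        intro h
        have := tau_side p q (τ⁻¹ (π u))
        rw [hτv] at this
        exact hu2 (this.mpr h)
      have hπv : ((π (τ⁻¹ (π u)) : ℕ) < p) := by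
        by_contra hnv
        have heq := hA (τ⁻¹ (π u)) (iff_of_false hvR hnv)
        have : τ⁻¹ (π u) = u := π.injective (by rw [heq, hτv])
        exact hvR (by rw [this]; exact hu1)
      have hsc : π.SameCycle (π⁻¹ (τ u)) (τ⁻¹ (π u)) := by
        have h1 : π.SameCycle (π⁻¹ (τ u)) (τ u) := ⟨1, by simp⟩
        exact h1.trans (hC u hu1 (by omega))
      exact hRLuniq _ _ hsc ⟨hw'R, hw'L⟩ ⟨hvR, hπv⟩
    have hSub2 : ∀ w : Fin (p+q), ¬((w:ℕ) < p) → ((π w : ℕ) < p) →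
        π⁻¹ (τ w) = τ⁻¹ (π w) := by
      intro w hw1 hw2
      have hτd : τ (τ⁻¹ (π w)) = π w := by simp
      have hdL : ((τ⁻¹ (π w) : ℕ) < p) := by
        have := tau_side p q (τ⁻¹ (π w))
        rw [hτd] at this
        exact this.mp hw2
      have hdR : ¬ ((π (τ⁻¹ (π w)) : ℕ) < p) := by
        intro h
        have heq := hA (τ⁻¹ (π w)) (iff_of_true hdL h)
        have : τ⁻¹ (π w) = w := π.injective (by rw [heq, hτd])
        exact hw1 (by rw [← this]; exact hdL)
      have hS := hSub1 (τ⁻¹ (π w)) hdL hdR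
      rw [hτd] at hS
      rw [← Equiv.Perm.mul_apply, inv_mul_cancel, Equiv.Perm.one_apply] at hS
      have hπd : π (τ⁻¹ (π w)) = τ w := by
        conv_rhs => rw [hS]
        simp
      rw [← hπd]
      simp
    have hinvol : ∀ x : Fin (p+q), σ x ≠ x → σ (σ x) = x := by
      intro x hx
      have hne : π x ≠ τ x := fun h => hx ((hσ_fix x).mpr h)
      have hside : ¬ (((x:ℕ) < p) ↔ ((π x : ℕ) < p)) := fun h => hne (hA x h)
      by_cases hxl : (x:ℕ) < p
      · have hxr : ¬ ((π x : ℕ) < p) := fun h => hside (iff_of_true hxl h)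
        have e1 : σ x = τ⁻¹ (π x) := by rw [hσ_apply]; exact hSub1 x hxl hxr
        rw [e1, hσ_apply]
        simp
      · have hxr : ((π x : ℕ) < p) := by
          by_contra h
          exact hside (iff_of_false hxl h)
        have e1 : σ x = τ⁻¹ (π x) := by rw [hσ_apply]; exact hSub2 x hxl hxr
        rw [e1, hσ_apply]
        simp
    have heq2 := eq_of_invol σ Sfix hmemF hinvol
    rw [← numOrbits_eq_card, Fintype.card_fin] at heq2
    have hper : ∀ c : Quotient (orbitSetoid π), (D ∩ fib π c).card = 2 := by
      intro c
      induction c using Quotient.ind with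
      | _ x =>
        obtain ⟨⟨u, huf, hu1, hu2⟩, ⟨w, hwf, hw1, hw2⟩⟩ := huw (Quotient.mk _ x)
        have hune : π u ≠ τ u := hside_ne u (by tauto)
        have hwne : π w ≠ τ w := hside_ne w (by tauto)
        have huwne : u ≠ w := fun h => hw1 (h ▸ hu1)
        have heqset : D ∩ fib π (Quotient.mk _ x) = {u, w} := by
          ext y
          simp only [Finset.mem_inter, Finset.mem_insert, Finset.mem_singleton]
          constructor
          · rintro ⟨hyD, hyf⟩
            have hyne := (hmemD y).mp hyD
            have hyside : ¬ (((y:ℕ) < p) ↔ ((π y : ℕ) < p)) := fun h => hyne (hA y h)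
            by_cases hyl : (y:ℕ) < p
            · left
              exact hLRuniq y u (sameCycle_of_mem_fib hyf huf)
                ⟨hyl, fun h => hyside (iff_of_true hyl h)⟩ ⟨hu1, hu2⟩
            · right
              refine hRLuniq y w (sameCycle_of_mem_fib hyf hwf) ⟨hyl, ?_⟩ ⟨hw1, hw2⟩
              by_contra h
              exact hyside (iff_of_false hyl h)
          · rintro (rfl | rfl)
            · exact ⟨(hmemD y).mpr hune, huf⟩
            · exact ⟨(hmemD y).mpr hwne, hwf⟩
        rw [heqset, Finset.card_pair huwne]
    have heq1 : D.card = 2 * numOrbits π := by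
      rw [hDsum, numOrbits_eq_card]
      rw [Finset.sum_congr rfl fun c _ => hper c]
      simp [mul_comm]
    omega
end
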